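/- arXiv:1806.09311 — 4 statements merged into one kernel-verified Lean document; each statement's English description precedes it below -/
import Mathlib

section
/- One-dimensional case of Theorem 3.1 (L²-stability of the truncated PML problem): There exists an absolute constant C > 0 such that for all k > 0, σ₀ > 0, 0 < R < R̂ with R̂ ≤ 2 and k·σ₀·L ≥ 1 (where L = R̂ − R), and all square-integrable f : [−R̂, R̂] → ℂ, the truncated PML solution û satisfies (∫_{−R̂}^{R̂} |û(x)|² dx)^{1/2} ≤ (C/k) (∫_{−R̂}^{R̂} |f(x)|² dx)^{1/2}. -/
open MeasureTheory intervalIntegral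

noncomputable section

/-- The complex coordinate stretching `t̃`: `t̃ = t` for `|t| ≤ R` and
`t̃ = t + i σ₀ sgn(t)(|t| − R)` for `|t| > R`. -/
def stretch (σ₀ R t : ℝ) : ℂ :=
  if |t| ≤ R then (t : ℂ) else (t : ℂ) + Complex.I * σ₀ * (Real.sign t * (|t| - R))

/-- `R̂̃ = R̂ + i σ₀ L` where `L = R̂ − R`. -/
def Rtil (σ₀ R Rh : ℝ) : ℂ := (Rh : ℂ) + Complex.I * σ₀ * ((Rh : ℂ) - R)

/-- `J₁ = ∫_{−R̂}^{R̂} e^{−ik t̃(t)} f(t) dt`. -/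
def J1 (k σ₀ R Rh : ℝ) (f : ℝ → ℂ) : ℂ :=
  ∫ t in (-Rh)..Rh, Complex.exp (-(Complex.I * k * stretch σ₀ R t)) * f t

/-- `J₂ = ∫_{−R̂}^{R̂} e^{ik t̃(t)} f(t) dt`. -/
def J2 (k σ₀ R Rh : ℝ) (f : ℝ → ℂ) : ℂ :=
  ∫ t in (-Rh)..Rh, Complex.exp (Complex.I * k * stretch σ₀ R t) * f t

/-- `D₁ = (1/(2ik))(e^{2ik R̂̃} J₂ − J₁)/(e^{2ik R̂̃} − e^{−2ik R̂̃})`. -/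
def D1 (k σ₀ R Rh : ℝ) (f : ℝ → ℂ) : ℂ :=
  (1 / (2 * Complex.I * k)) *
    (Complex.exp (2 * Complex.I * k * Rtil σ₀ R Rh) * J2 k σ₀ R Rh f - J1 k σ₀ R Rh f) /
      (Complex.exp (2 * Complex.I * k * Rtil σ₀ R Rh) -
        Complex.exp (-(2 * Complex.I * k * Rtil σ₀ R Rh)))

/-- `D₂ = (1/(2ik))(e^{2ik R̂̃} J₁ − J₂)/(e^{2ik R̂̃} − e^{−2ik R̂̃})`. -/
def D2 (k σ₀ R Rh : ℝ) (f : ℝ → ℂ) : ℂ :=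
  (1 / (2 * Complex.I * k)) *
    (Complex.exp (2 * Complex.I * k * Rtil σ₀ R Rh) * J1 k σ₀ R Rh f - J2 k σ₀ R Rh f) /
      (Complex.exp (2 * Complex.I * k * Rtil σ₀ R Rh) -
        Complex.exp (-(2 * Complex.I * k * Rtil σ₀ R Rh)))

/-- The truncated PML solution `û` in one dimension. -/
def uhat (k σ₀ R Rh : ℝ) (f : ℝ → ℂ) (x : ℝ) : ℂ :=
  -(1 / (2 * Complex.I * k)) * Complex.exp (-(Complex.I * k * stretch σ₀ R x)) *
      (∫ t in x..Rh, Complex.exp (Complex.I * k * stretch σ₀ R t) * f t)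
    - (1 / (2 * Complex.I * k)) * Complex.exp (Complex.I * k * stretch σ₀ R x) *
      (∫ t in (-Rh)..x, Complex.exp (-(Complex.I * k * stretch σ₀ R t)) * f t)
    + D1 k σ₀ R Rh f * Complex.exp (-(Complex.I * k * stretch σ₀ R x))
    + D2 k σ₀ R Rh f * Complex.exp (Complex.I * k * stretch σ₀ R x)

lemma stretch_im_eq (σ₀ R : ℝ) (hR : 0 ≤ R) (t : ℝ) :
    (stretch σ₀ R t).im = σ₀ * (max (t - R) 0 + min (t + R) 0) := by
  unfold stretch
  by_cases h : |t| ≤ R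
  · rw [if_pos h]
    rw [abs_le] at h
    rw [max_eq_right (by linarith), min_eq_right (by linarith)]
    simp
  · rw [if_neg h]
    push_neg at h
    rcases lt_or_ge t 0 with ht | ht
    · have habs : |t| = -t := abs_of_neg ht
      have htR : t < -R := by rw [habs] at h; linarith
      rw [Real.sign_of_neg ht]
      rw [max_eq_right (by linarith), min_eq_left (by linarith)]
      simp only [Complex.add_im, Complex.mul_im, Complex.mul_re, Complex.I_re, Complex.I_im,
        Complex.ofReal_re, Complex.ofReal_im, Complex.sub_re, Complex.sub_im, habs]
      ring
    · have ht' : 0 < t := lt_of_le_of_ne ht (by rintro rfl; simp at h; linarith)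
      have habs : |t| = t := abs_of_pos ht'
      have htR : R < t := by rw [habs] at h; exact h
      rw [Real.sign_of_pos ht']
      rw [max_eq_left (by linarith), min_eq_right (by linarith)]
      simp only [Complex.add_im, Complex.mul_im, Complex.mul_re, Complex.I_re, Complex.I_im,
        Complex.ofReal_re, Complex.ofReal_im, Complex.sub_re, Complex.sub_im, habs]
      ring

lemma stretch_im_mono (σ₀ R : ℝ) (hσ : 0 ≤ σ₀) (hR : 0 ≤ R) :
    Monotone fun t => (stretch σ₀ R t).im := by
  intro a b hab
  simp only [stretch_im_eq σ₀ R hR]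
  have h1 : max (a - R) 0 ≤ max (b - R) 0 := max_le_max (by linarith) le_rfl
  have h2 : min (a + R) 0 ≤ min (b + R) 0 := min_le_min (by linarith) le_rfl
  exact mul_le_mul_of_nonneg_left (add_le_add h1 h2) hσ

lemma stretch_im_abs_le (σ₀ R Rh : ℝ) (hσ : 0 ≤ σ₀) (hR : 0 ≤ R) (hRRh : R ≤ Rh)
    {t : ℝ} (ht : t ∈ Set.Icc (-Rh) Rh) :
    |(stretch σ₀ R t).im| ≤ σ₀ * (Rh - R) := by
  obtain ⟨h1, h2⟩ := ht
  rw [stretch_im_eq σ₀ R hR, abs_le]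
  have hmax0 : (0:ℝ) ≤ max (t - R) 0 := le_max_right _ _
  have hmin0 : min (t + R) 0 ≤ 0 := min_le_right _ _
  have hmaxle : max (t - R) 0 ≤ Rh - R := max_le (by linarith) (by linarith)
  have hminge : -(Rh - R) ≤ min (t + R) 0 := le_min (by linarith) (by linarith)
  constructor <;> nlinarith

lemma norm_exp_I_mul (k : ℝ) (z : ℂ) :
    ‖Complex.exp (Complex.I * k * z)‖ = Real.exp (-(k * z.im)) := by
  rw [Complex.norm_exp]
  congr 1
  simp [Complex.mul_re, Complex.mul_im]

lemma norm_exp_neg_I_mul (k : ℝ) (z : ℂ) :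
    ‖Complex.exp (-(Complex.I * k * z))‖ = Real.exp (k * z.im) := by
  rw [Complex.norm_exp]
  congr 1
  simp [Complex.mul_re, Complex.mul_im]

lemma measurable_stretch (σ₀ R : ℝ) : Measurable (stretch σ₀ R) := by
  have hsign : Measurable Real.sign := by
    have : Real.sign = fun r : ℝ => if r < 0 then (-1:ℝ) else if 0 < r then 1 else 0 := by
      funext r; rfl
    rw [this]
    exact Measurable.ite (measurableSet_lt measurable_id measurable_const) measurable_const
      (Measurable.ite (measurableSet_lt measurable_const measurable_id) measurable_const
        measurable_const)
  unfold stretch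
  apply Measurable.ite (measurableSet_le measurable_id.abs measurable_const)
  · exact Complex.measurable_ofReal
  · apply Complex.measurable_ofReal.add
    apply Measurable.mul measurable_const
    apply Measurable.mul (Complex.measurable_ofReal.comp hsign)
    exact ((Complex.measurable_ofReal.comp measurable_id.abs).sub measurable_const)

set_option maxHeartbeats 2000000 in
/-- One-dimensional case of Theorem 3.1 (L²-stability of the truncated PML problem):
there is an absolute constant `C > 0` such that for all `k > 0`, `σ₀ > 0`, `0 < R < R̂ ≤ 2`
with `k σ₀ L ≥ 1` (`L = R̂ − R`) and all square-integrable `f` on `[−R̂, R̂]`,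
`‖û‖_{L²(−R̂,R̂)} ≤ (C/k) ‖f‖_{L²(−R̂,R̂)}`. -/
theorem pml_L2_stability_1d :
    ∃ C : ℝ, 0 < C ∧
      ∀ (k σ₀ R Rh : ℝ) (f : ℝ → ℂ),
        0 < k → 0 < σ₀ → 0 < R → R < Rh → Rh ≤ 2 → 1 ≤ k * σ₀ * (Rh - R) →
        MemLp f 2 (volume.restrict (Set.Icc (-Rh) Rh)) →
        Real.sqrt (∫ x in (-Rh)..Rh, ‖uhat k σ₀ R Rh f x‖ ^ 2) ≤
          (C / k) * Real.sqrt (∫ x in (-Rh)..Rh, ‖f x‖ ^ 2) := by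
  refine ⟨20, by norm_num, ?_⟩
  intro k σ₀ R Rh f hk hσ hR hRRh hRh2 hM hmem
  have hRh0 : 0 < Rh := lt_trans hR hRRh
  have hab : (-Rh) ≤ Rh := by linarith
  have hM0 : (0:ℝ) < k * σ₀ * (Rh - R) := lt_of_lt_of_le one_pos hM
  set g : ℝ → ℝ := fun t => (stretch σ₀ R t).im with hgdef
  have hgb : ∀ t ∈ Set.Icc (-Rh) Rh, |k * g t| ≤ k * σ₀ * (Rh - R) := by
    intro t ht
    have h1 := stretch_im_abs_le σ₀ R Rh hσ.le hR.le (by linarith) ht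
    rw [abs_mul, abs_of_pos hk]
    calc k * |g t| ≤ k * (σ₀ * (Rh - R)) := mul_le_mul_of_nonneg_left h1 hk.le
      _ = k * σ₀ * (Rh - R) := by ring
  have hgmono : Monotone g := stretch_im_mono σ₀ R hσ.le hR.le
  -- integrability setup
  haveI hfin : IsFiniteMeasure (volume.restrict (Set.Icc (-Rh) Rh)) :=
    ⟨by rw [Measure.restrict_apply_univ]; exact measure_Icc_lt_top⟩
  have hfIcc : IntegrableOn f (Set.Icc (-Rh) Rh) :=
    hmem.integrable (by norm_num)
  have huIocIcc : Set.uIoc (-Rh) Rh ⊆ Set.Icc (-Rh) Rh := by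
    rw [Set.uIoc_of_le hab]; exact Set.Ioc_subset_Icc_self
  have hfuIoc : IntegrableOn f (Set.uIoc (-Rh) Rh) := hfIcc.mono_set huIocIcc
  have hfi : IntervalIntegrable f volume (-Rh) Rh := by
    rw [intervalIntegrable_iff]; exact hfuIoc
  -- integrability of the exponential-weighted integrands
  have hmeas1 : Measurable (fun t => Complex.exp (Complex.I * k * stretch σ₀ R t)) :=
    Complex.measurable_exp.comp (measurable_const.mul (measurable_stretch σ₀ R))
  have hmeas2 : Measurable (fun t => Complex.exp (-(Complex.I * k * stretch σ₀ R t))) :=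
    Complex.measurable_exp.comp (measurable_const.mul (measurable_stretch σ₀ R)).neg
  have hbd1 : ∀ t ∈ Set.Icc (-Rh) Rh,
      ‖Complex.exp (Complex.I * k * stretch σ₀ R t)‖ ≤ Real.exp (k * σ₀ * (Rh - R)) := by
    intro t ht
    rw [norm_exp_I_mul]
    exact Real.exp_le_exp.mpr (le_trans (neg_le_abs _) (hgb t ht))
  have hbd2 : ∀ t ∈ Set.Icc (-Rh) Rh,
      ‖Complex.exp (-(Complex.I * k * stretch σ₀ R t))‖ ≤ Real.exp (k * σ₀ * (Rh - R)) := by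
    intro t ht
    rw [norm_exp_neg_I_mul]
    exact Real.exp_le_exp.mpr (le_trans (le_abs_self _) (hgb t ht))
  have hE1 : IntervalIntegrable (fun t => Complex.exp (Complex.I * k * stretch σ₀ R t) * f t)
      volume (-Rh) Rh := by
    rw [intervalIntegrable_iff]
    exact Integrable.bdd_mul hfuIoc hmeas1.aestronglyMeasurable
      ((ae_restrict_iff' measurableSet_uIoc).mpr
        (ae_of_all _ (fun t ht => hbd1 t (huIocIcc ht))))
  have hE2 : IntervalIntegrable (fun t => Complex.exp (-(Complex.I * k * stretch σ₀ R t)) * f t)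
      volume (-Rh) Rh := by
    rw [intervalIntegrable_iff]
    exact Integrable.bdd_mul hfuIoc hmeas2.aestronglyMeasurable
      ((ae_restrict_iff' measurableSet_uIoc).mpr
        (ae_of_all _ (fun t ht => hbd2 t (huIocIcc ht))))
  set F1 : ℝ := ∫ t in (-Rh)..Rh, ‖f t‖ with hF1def
  have hF1 : 0 ≤ F1 := integral_nonneg hab (fun t _ => norm_nonneg _)
  -- J bounds
  have hJ1 : ‖J1 k σ₀ R Rh f‖ ≤ Real.exp (k * σ₀ * (Rh - R)) * F1 := by
    calc ‖J1 k σ₀ R Rh f‖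
        ≤ ∫ t in (-Rh)..Rh, ‖Complex.exp (-(Complex.I * k * stretch σ₀ R t)) * f t‖ :=
          intervalIntegral.norm_integral_le_integral_norm hab
      _ ≤ ∫ t in (-Rh)..Rh, Real.exp (k * σ₀ * (Rh - R)) * ‖f t‖ := by
          refine intervalIntegral.integral_mono_on hab hE2.norm (hfi.norm.const_mul _) ?_
          intro t ht
          rw [norm_mul]
          exact mul_le_mul_of_nonneg_right (hbd2 t ht) (norm_nonneg _)
      _ = Real.exp (k * σ₀ * (Rh - R)) * F1 := intervalIntegral.integral_const_mul _ _
  have hJ2 : ‖J2 k σ₀ R Rh f‖ ≤ Real.exp (k * σ₀ * (Rh - R)) * F1 := by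
    calc ‖J2 k σ₀ R Rh f‖
        ≤ ∫ t in (-Rh)..Rh, ‖Complex.exp (Complex.I * k * stretch σ₀ R t) * f t‖ :=
          intervalIntegral.norm_integral_le_integral_norm hab
      _ ≤ ∫ t in (-Rh)..Rh, Real.exp (k * σ₀ * (Rh - R)) * ‖f t‖ := by
          refine intervalIntegral.integral_mono_on hab hE1.norm (hfi.norm.const_mul _) ?_
          intro t ht
          rw [norm_mul]
          exact mul_le_mul_of_nonneg_right (hbd1 t ht) (norm_nonneg _)
      _ = Real.exp (k * σ₀ * (Rh - R)) * F1 := intervalIntegral.integral_const_mul _ _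
  -- denominator bound
  have hreE : (2 * Complex.I * k * Rtil σ₀ R Rh).re = -(2 * (k * σ₀ * (Rh - R))) := by
    simp [Rtil, Complex.mul_re, Complex.mul_im]
    ring
  have hEnorm : ‖Complex.exp (2 * Complex.I * k * Rtil σ₀ R Rh)‖
      = Real.exp (-(2 * (k * σ₀ * (Rh - R)))) := by
    rw [Complex.norm_exp, hreE]
  have hEnorm' : ‖Complex.exp (-(2 * Complex.I * k * Rtil σ₀ R Rh))‖
      = Real.exp (2 * (k * σ₀ * (Rh - R))) := by
    rw [Complex.norm_exp, Complex.neg_re, hreE, neg_neg]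
  have hexp2big : 1 + 2 * (k * σ₀ * (Rh - R)) ≤ Real.exp (2 * (k * σ₀ * (Rh - R))) := by
    have := Real.add_one_le_exp (2 * (k * σ₀ * (Rh - R)))
    linarith
  have hexpneg1 : Real.exp (-(2 * (k * σ₀ * (Rh - R)))) ≤ 1 := by
    rw [show (1:ℝ) = Real.exp 0 from (Real.exp_zero).symm]
    exact Real.exp_le_exp.mpr (by linarith)
  have hden : Real.exp (2 * (k * σ₀ * (Rh - R))) / 2 ≤
      ‖Complex.exp (2 * Complex.I * k * Rtil σ₀ R Rh) -
        Complex.exp (-(2 * Complex.I * k * Rtil σ₀ R Rh))‖ := by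
    have h1 : ‖Complex.exp (-(2 * Complex.I * k * Rtil σ₀ R Rh))‖ -
        ‖Complex.exp (2 * Complex.I * k * Rtil σ₀ R Rh)‖ ≤
        ‖Complex.exp (-(2 * Complex.I * k * Rtil σ₀ R Rh)) -
          Complex.exp (2 * Complex.I * k * Rtil σ₀ R Rh)‖ := norm_sub_norm_le _ _
    rw [norm_sub_rev] at h1
    rw [hEnorm, hEnorm'] at h1
    linarith
  have h2ik : ‖(1:ℂ) / (2 * Complex.I * k)‖ = 1 / (2 * k) := by
    simp [norm_div, norm_mul, Complex.norm_I, Complex.norm_real,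
      abs_of_pos hk]
  -- D1 and D2 bounds
  have hexpM0 : (0:ℝ) < Real.exp (k * σ₀ * (Rh - R)) := Real.exp_pos _
  have hexp2eq : Real.exp (2 * (k * σ₀ * (Rh - R))) =
      Real.exp (k * σ₀ * (Rh - R)) * Real.exp (k * σ₀ * (Rh - R)) := by
    rw [← Real.exp_add]; ring_nf
  have hnum : ∀ A B : ℂ, ‖A‖ ≤ Real.exp (k * σ₀ * (Rh - R)) * F1 →
      ‖B‖ ≤ Real.exp (k * σ₀ * (Rh - R)) * F1 →
      ‖Complex.exp (2 * Complex.I * k * Rtil σ₀ R Rh) * A - B‖ ≤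
        2 * (Real.exp (k * σ₀ * (Rh - R)) * F1) := by
    intro A B hA hB
    calc ‖Complex.exp (2 * Complex.I * k * Rtil σ₀ R Rh) * A - B‖
        ≤ ‖Complex.exp (2 * Complex.I * k * Rtil σ₀ R Rh) * A‖ + ‖B‖ := norm_sub_le _ _
      _ = ‖Complex.exp (2 * Complex.I * k * Rtil σ₀ R Rh)‖ * ‖A‖ + ‖B‖ := by rw [norm_mul]
      _ ≤ 1 * (Real.exp (k * σ₀ * (Rh - R)) * F1) + Real.exp (k * σ₀ * (Rh - R)) * F1 := by
          refine add_le_add (mul_le_mul ?_ hA (norm_nonneg _) one_pos.le) hB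
          rw [hEnorm]; exact hexpneg1
      _ = 2 * (Real.exp (k * σ₀ * (Rh - R)) * F1) := by ring
  have hDbound : ∀ A B : ℂ, ‖A‖ ≤ Real.exp (k * σ₀ * (Rh - R)) * F1 →
      ‖B‖ ≤ Real.exp (k * σ₀ * (Rh - R)) * F1 →
      ‖(1 / (2 * Complex.I * k)) *
        (Complex.exp (2 * Complex.I * k * Rtil σ₀ R Rh) * A - B) /
        (Complex.exp (2 * Complex.I * k * Rtil σ₀ R Rh) -
          Complex.exp (-(2 * Complex.I * k * Rtil σ₀ R Rh)))‖ ≤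
      2 / k * (F1 / Real.exp (k * σ₀ * (Rh - R))) := by
    intro A B hA hB
    rw [norm_div, norm_mul, h2ik]
    have hd0 : (0:ℝ) < Real.exp (2 * (k * σ₀ * (Rh - R))) / 2 := by positivity
    calc 1 / (2 * k) * ‖Complex.exp (2 * Complex.I * k * Rtil σ₀ R Rh) * A - B‖ /
          ‖Complex.exp (2 * Complex.I * k * Rtil σ₀ R Rh) -
            Complex.exp (-(2 * Complex.I * k * Rtil σ₀ R Rh))‖
        ≤ 1 / (2 * k) * (2 * (Real.exp (k * σ₀ * (Rh - R)) * F1)) /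
            (Real.exp (2 * (k * σ₀ * (Rh - R))) / 2) := by
          apply div_le_div₀ (by positivity) ?_ hd0 hden
          exact mul_le_mul_of_nonneg_left (hnum A B hA hB) (by positivity)
      _ = 2 / k * (F1 / Real.exp (k * σ₀ * (Rh - R))) := by
          rw [hexp2eq]
          field_simp
  have hD1 : ‖D1 k σ₀ R Rh f‖ ≤ 2 / k * (F1 / Real.exp (k * σ₀ * (Rh - R))) :=
    hDbound _ _ hJ2 hJ1
  have hD2 : ‖D2 k σ₀ R Rh f‖ ≤ 2 / k * (F1 / Real.exp (k * σ₀ * (Rh - R))) :=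
    hDbound _ _ hJ1 hJ2
  -- pointwise bound on uhat
  have hpt : ∀ x ∈ Set.Icc (-Rh) Rh, ‖uhat k σ₀ R Rh f x‖ ≤ 5 / k * F1 := by
    intro x hx
    obtain ⟨hx1, hx2⟩ := hx
    have hsubR : Set.uIcc x Rh ⊆ Set.uIcc (-Rh) Rh := by
      rw [Set.uIcc_of_le hx2, Set.uIcc_of_le hab]
      exact Set.Icc_subset_Icc hx1 le_rfl
    have hsubL : Set.uIcc (-Rh) x ⊆ Set.uIcc (-Rh) Rh := by
      rw [Set.uIcc_of_le hx1, Set.uIcc_of_le hab]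
      exact Set.Icc_subset_Icc le_rfl hx2
    have hfnormnn : 0 ≤ᵐ[volume.restrict (Set.Ioc (-Rh) Rh)] fun t => ‖f t‖ :=
      ae_of_all _ (fun t => norm_nonneg _)
    -- bound for the first inner integral
    have hI1 : ‖∫ t in x..Rh, Complex.exp (Complex.I * k * stretch σ₀ R t) * f t‖ ≤
        Real.exp (-(k * g x)) * F1 := by
      calc ‖∫ t in x..Rh, Complex.exp (Complex.I * k * stretch σ₀ R t) * f t‖
          ≤ ∫ t in x..Rh, ‖Complex.exp (Complex.I * k * stretch σ₀ R t) * f t‖ :=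
            intervalIntegral.norm_integral_le_integral_norm hx2
        _ ≤ ∫ t in x..Rh, Real.exp (-(k * g x)) * ‖f t‖ := by
            refine intervalIntegral.integral_mono_on hx2 (hE1.norm.mono_set hsubR)
              ((hfi.norm.const_mul _).mono_set hsubR) ?_
            intro t ht
            rw [norm_mul, norm_exp_I_mul]
            refine mul_le_mul_of_nonneg_right ?_ (norm_nonneg _)
            exact Real.exp_le_exp.mpr (neg_le_neg
              (mul_le_mul_of_nonneg_left (hgmono ht.1) hk.le))
        _ = Real.exp (-(k * g x)) * ∫ t in x..Rh, ‖f t‖ :=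
            intervalIntegral.integral_const_mul _ _
        _ ≤ Real.exp (-(k * g x)) * F1 := by
            refine mul_le_mul_of_nonneg_left ?_ (Real.exp_pos _).le
            exact intervalIntegral.integral_mono_interval hx1 hx2 le_rfl hfnormnn hfi.norm
    -- bound for the second inner integral
    have hI2 : ‖∫ t in (-Rh)..x, Complex.exp (-(Complex.I * k * stretch σ₀ R t)) * f t‖ ≤
        Real.exp (k * g x) * F1 := by
      calc ‖∫ t in (-Rh)..x, Complex.exp (-(Complex.I * k * stretch σ₀ R t)) * f t‖
          ≤ ∫ t in (-Rh)..x, ‖Complex.exp (-(Complex.I * k * stretch σ₀ R t)) * f t‖ :=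
            intervalIntegral.norm_integral_le_integral_norm hx1
        _ ≤ ∫ t in (-Rh)..x, Real.exp (k * g x) * ‖f t‖ := by
            refine intervalIntegral.integral_mono_on hx1 (hE2.norm.mono_set hsubL)
              ((hfi.norm.const_mul _).mono_set hsubL) ?_
            intro t ht
            rw [norm_mul, norm_exp_neg_I_mul]
            refine mul_le_mul_of_nonneg_right ?_ (norm_nonneg _)
            exact Real.exp_le_exp.mpr (mul_le_mul_of_nonneg_left (hgmono ht.2) hk.le)
        _ = Real.exp (k * g x) * ∫ t in (-Rh)..x, ‖f t‖ :=
            intervalIntegral.integral_const_mul _ _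
        _ ≤ Real.exp (k * g x) * F1 := by
            refine mul_le_mul_of_nonneg_left ?_ (Real.exp_pos _).le
            exact intervalIntegral.integral_mono_interval le_rfl hx1 hx2 hfnormnn hfi.norm
    -- norms of the exponential prefactors at x
    have hgx : |k * g x| ≤ k * σ₀ * (Rh - R) := hgb x ⟨hx1, hx2⟩
    have hpre1 : ‖Complex.exp (-(Complex.I * k * stretch σ₀ R x))‖ = Real.exp (k * g x) :=
      norm_exp_neg_I_mul k _
    have hpre2 : ‖Complex.exp (Complex.I * k * stretch σ₀ R x)‖ = Real.exp (-(k * g x)) :=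
      norm_exp_I_mul k _
    have hmulexp : Real.exp (k * g x) * Real.exp (-(k * g x)) = 1 := by
      rw [← Real.exp_add]; simp
    -- term bounds
    have hT1 : ‖-(1 / (2 * Complex.I * k)) * Complex.exp (-(Complex.I * k * stretch σ₀ R x)) *
        (∫ t in x..Rh, Complex.exp (Complex.I * k * stretch σ₀ R t) * f t)‖ ≤
        1 / (2 * k) * F1 := by
      rw [norm_mul, norm_mul, norm_neg, h2ik, hpre1]
      calc 1 / (2 * k) * Real.exp (k * g x) *
          ‖∫ t in x..Rh, Complex.exp (Complex.I * k * stretch σ₀ R t) * f t‖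
          ≤ 1 / (2 * k) * Real.exp (k * g x) * (Real.exp (-(k * g x)) * F1) := by
            exact mul_le_mul_of_nonneg_left hI1 (by positivity)
        _ = 1 / (2 * k) * F1 * (Real.exp (k * g x) * Real.exp (-(k * g x))) := by ring
        _ = 1 / (2 * k) * F1 := by rw [hmulexp, mul_one]
    have hT2 : ‖(1 / (2 * Complex.I * k)) * Complex.exp (Complex.I * k * stretch σ₀ R x) *
        (∫ t in (-Rh)..x, Complex.exp (-(Complex.I * k * stretch σ₀ R t)) * f t)‖ ≤
        1 / (2 * k) * F1 := by
      rw [norm_mul, norm_mul, h2ik, hpre2]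
      calc 1 / (2 * k) * Real.exp (-(k * g x)) *
          ‖∫ t in (-Rh)..x, Complex.exp (-(Complex.I * k * stretch σ₀ R t)) * f t‖
          ≤ 1 / (2 * k) * Real.exp (-(k * g x)) * (Real.exp (k * g x) * F1) := by
            exact mul_le_mul_of_nonneg_left hI2 (by positivity)
        _ = 1 / (2 * k) * F1 * (Real.exp (k * g x) * Real.exp (-(k * g x))) := by ring
        _ = 1 / (2 * k) * F1 := by rw [hmulexp, mul_one]
    have hexpgx1 : Real.exp (k * g x) ≤ Real.exp (k * σ₀ * (Rh - R)) :=
      Real.exp_le_exp.mpr (le_trans (le_abs_self _) hgx)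
    have hexpgx2 : Real.exp (-(k * g x)) ≤ Real.exp (k * σ₀ * (Rh - R)) :=
      Real.exp_le_exp.mpr (le_trans (neg_le_abs _) hgx)
    have hT3 : ‖D1 k σ₀ R Rh f * Complex.exp (-(Complex.I * k * stretch σ₀ R x))‖ ≤
        2 / k * F1 := by
      rw [norm_mul, hpre1]
      calc ‖D1 k σ₀ R Rh f‖ * Real.exp (k * g x)
          ≤ 2 / k * (F1 / Real.exp (k * σ₀ * (Rh - R))) * Real.exp (k * σ₀ * (Rh - R)) :=
            mul_le_mul hD1 hexpgx1 (Real.exp_pos _).le (by positivity)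
        _ = 2 / k * F1 := by field_simp
    have hT4 : ‖D2 k σ₀ R Rh f * Complex.exp (Complex.I * k * stretch σ₀ R x)‖ ≤
        2 / k * F1 := by
      rw [norm_mul, hpre2]
      calc ‖D2 k σ₀ R Rh f‖ * Real.exp (-(k * g x))
          ≤ 2 / k * (F1 / Real.exp (k * σ₀ * (Rh - R))) * Real.exp (k * σ₀ * (Rh - R)) :=
            mul_le_mul hD2 hexpgx2 (Real.exp_pos _).le (by positivity)
        _ = 2 / k * F1 := by field_simp
    -- combine
    unfold uhat
    have h12 := norm_sub_le
      (-(1 / (2 * Complex.I * k)) * Complex.exp (-(Complex.I * k * stretch σ₀ R x)) *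
        (∫ t in x..Rh, Complex.exp (Complex.I * k * stretch σ₀ R t) * f t))
      ((1 / (2 * Complex.I * k)) * Complex.exp (Complex.I * k * stretch σ₀ R x) *
        (∫ t in (-Rh)..x, Complex.exp (-(Complex.I * k * stretch σ₀ R t)) * f t))
    have h123 := norm_add_le
      (-(1 / (2 * Complex.I * k)) * Complex.exp (-(Complex.I * k * stretch σ₀ R x)) *
        (∫ t in x..Rh, Complex.exp (Complex.I * k * stretch σ₀ R t) * f t) -
        (1 / (2 * Complex.I * k)) * Complex.exp (Complex.I * k * stretch σ₀ R x) *
        (∫ t in (-Rh)..x, Complex.exp (-(Complex.I * k * stretch σ₀ R t)) * f t))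
      (D1 k σ₀ R Rh f * Complex.exp (-(Complex.I * k * stretch σ₀ R x)))
    have h1234 := norm_add_le
      (-(1 / (2 * Complex.I * k)) * Complex.exp (-(Complex.I * k * stretch σ₀ R x)) *
        (∫ t in x..Rh, Complex.exp (Complex.I * k * stretch σ₀ R t) * f t) -
        (1 / (2 * Complex.I * k)) * Complex.exp (Complex.I * k * stretch σ₀ R x) *
        (∫ t in (-Rh)..x, Complex.exp (-(Complex.I * k * stretch σ₀ R t)) * f t) +
        D1 k σ₀ R Rh f * Complex.exp (-(Complex.I * k * stretch σ₀ R x)))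
      (D2 k σ₀ R Rh f * Complex.exp (Complex.I * k * stretch σ₀ R x))
    have hfin5 : 1 / (2 * k) * F1 + 1 / (2 * k) * F1 + 2 / k * F1 + 2 / k * F1 = 5 / k * F1 := by
      field_simp
      ring
    linarith
  -- Cauchy-Schwarz : F1 ≤ 2 * sqrt I2
  set I2 : ℝ := ∫ x in (-Rh)..Rh, ‖f x‖ ^ 2 with hI2def
  have hI2nonneg : 0 ≤ I2 := integral_nonneg hab (fun x _ => sq_nonneg _)
  have hI2i : IntervalIntegrable (fun x => ‖f x‖ ^ 2) volume (-Rh) Rh := by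
    rw [intervalIntegrable_iff]
    have h := hmem.norm.integrable_sq
    exact (Integrable.mono_measure h (Measure.restrict_mono huIocIcc le_rfl) : _)
  have key : ∀ ε : ℝ, 0 < ε → F1 ≤ ε / 2 * I2 + Rh / ε := by
    intro ε hε
    have hptw : ∀ t ∈ Set.Icc (-Rh) Rh, ‖f t‖ ≤ ε / 2 * ‖f t‖ ^ 2 + 1 / (2 * ε) := by
      intro t _
      have hii : 2 * ε * (1 / (2 * ε)) = 1 := by field_simp
      nlinarith [sq_nonneg (ε * ‖f t‖ - 1), hε, norm_nonneg (f t)]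
    calc F1 ≤ ∫ t in (-Rh)..Rh, (ε / 2 * ‖f t‖ ^ 2 + 1 / (2 * ε)) :=
          intervalIntegral.integral_mono_on hab hfi.norm
            ((hI2i.const_mul _).add intervalIntegrable_const) hptw
      _ = ε / 2 * I2 + Rh / ε := by
          rw [intervalIntegral.integral_add (hI2i.const_mul _) intervalIntegrable_const,
            intervalIntegral.integral_const_mul, intervalIntegral.integral_const]
          have hc : (Rh - -Rh) • (1 / (2 * ε)) = Rh / ε := by
            rw [smul_eq_mul]
            field_simp
            ring
          rw [hc]
  have hCS : F1 ≤ 2 * Real.sqrt I2 := by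
    rcases eq_or_lt_of_le hI2nonneg with h0 | hpos
    · by_contra hcon
      push_neg at hcon
      rw [← h0, Real.sqrt_zero, mul_zero] at hcon
      have hF1pos : 0 < F1 := hcon
      have hkey := key (2 * Rh / F1) (by positivity)
      rw [← h0, mul_zero, zero_add] at hkey
      rw [div_div_eq_mul_div, le_div_iff₀ (by positivity)] at hkey
      nlinarith
    · have hS : 0 < Real.sqrt I2 := Real.sqrt_pos.mpr hpos
      have hss : Real.sqrt I2 * Real.sqrt I2 = I2 := Real.mul_self_sqrt hI2nonneg
      have hkey := key (2 / Real.sqrt I2) (by positivity)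
      have he1 : 2 / Real.sqrt I2 / 2 * I2 = Real.sqrt I2 := by
        field_simp
        nlinarith [hss]
      have he2 : Rh / (2 / Real.sqrt I2) ≤ Real.sqrt I2 := by
        rw [div_div_eq_mul_div, div_le_iff₀ (by norm_num)]
        nlinarith [hS]
      rw [he1] at hkey
      linarith
  -- conclusion
  have hbound : ∀ x ∈ Set.uIoc (-Rh) Rh, ‖(‖uhat k σ₀ R Rh f x‖ ^ 2 : ℝ)‖ ≤ (5 / k * F1) ^ 2 := by
    intro x hx
    have hx' : x ∈ Set.Icc (-Rh) Rh := huIocIcc hx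
    rw [Real.norm_eq_abs, abs_of_nonneg (sq_nonneg _)]
    have h5 : (0:ℝ) ≤ 5 / k * F1 := by positivity
    have := hpt x hx'
    nlinarith [norm_nonneg (uhat k σ₀ R Rh f x)]
  have hint : ‖∫ x in (-Rh)..Rh, ‖uhat k σ₀ R Rh f x‖ ^ 2‖ ≤ (5 / k * F1) ^ 2 * |Rh - (-Rh)| :=
    intervalIntegral.norm_integral_le_of_norm_le_const hbound
  have habs2 : |Rh - (-Rh)| = 2 * Rh := by rw [abs_of_pos (by linarith)]; ring
  have h1 : (∫ x in (-Rh)..Rh, ‖uhat k σ₀ R Rh f x‖ ^ 2) ≤ (10 / k * F1) ^ 2 := by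
    rw [Real.norm_eq_abs, habs2] at hint
    have hle := le_abs_self (∫ x in (-Rh)..Rh, ‖uhat k σ₀ R Rh f x‖ ^ 2)
    have hsq : (0:ℝ) ≤ (5 / k * F1) ^ 2 := sq_nonneg _
    have hid : (10 / k * F1) ^ 2 = 4 * (5 / k * F1) ^ 2 := by ring
    have hmul : (5 / k * F1) ^ 2 * (2 * Rh) ≤ (5 / k * F1) ^ 2 * 4 :=
      mul_le_mul_of_nonneg_left (by linarith) hsq
    linarith
  calc Real.sqrt (∫ x in (-Rh)..Rh, ‖uhat k σ₀ R Rh f x‖ ^ 2)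
      ≤ Real.sqrt ((10 / k * F1) ^ 2) := Real.sqrt_le_sqrt h1
    _ = 10 / k * F1 := Real.sqrt_sq (by positivity)
    _ ≤ 10 / k * (2 * Real.sqrt I2) := mul_le_mul_of_nonneg_left hCS (by positivity)
    _ = 20 / k * Real.sqrt I2 := by ring

end
end

section
/- One-dimensional case of Corollary 3.2 (energy-norm stability of the truncated PML problem): There exists a constant C > 0 depending only on σ₀ such that for all k > 0, 0 < R < R̂ with R̂ ≤ 2 and k·σ₀·L ≥ 1 (where L = R̂ − R), and all continuous f : [−R̂, R̂] → ℂ, the truncated PML solution û is differentiable at every x ∈ (−R̂, R̂) with |x| ≠ R and satisfies (∫_{(−R̂,R̂)∖{−R,R}} |û′(x)|² dx + k² ∫_{−R̂}^{R̂} |û(x)|² dx)^{1/2} ≤ C (∫_{−R̂}^{R̂} |f(x)|² dx)^{1/2}. -/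
open MeasureTheory intervalIntegral

noncomputable section

/-! ### Auxiliary machinery -/

namespace PML1d

/-- piecewise-linear stretching profile -/
def sfun (R t : ℝ) : ℝ := max (t - R) 0 + min (t + R) 0

lemma sfun_monotone (R : ℝ) : Monotone (sfun R) := by
  apply Monotone.add
  · exact fun a b h => max_le_max (by linarith) le_rfl
  · exact fun a b h => min_le_min (by linarith) le_rfl

lemma stretch_eq (σ₀ : ℝ) {R : ℝ} (hR : 0 ≤ R) (t : ℝ) :
    stretch σ₀ R t = (t : ℂ) + Complex.I * σ₀ * (sfun R t : ℝ) := by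
  unfold stretch sfun
  by_cases h : |t| ≤ R
  · have h1 : t - R ≤ 0 := by cases abs_le.mp h; linarith
    have h2 : 0 ≤ t + R := by cases abs_le.mp h; linarith
    rw [if_pos h, max_eq_right h1, min_eq_right h2]
    push_cast; ring
  · rw [if_neg h]
    push_neg at h
    rcases lt_trichotomy t 0 with ht | ht | ht
    · have habs : |t| = -t := abs_of_neg ht
      have h2 : t + R ≤ 0 := by rw [habs] at h; linarith
      have h1 : t - R ≤ 0 := by linarith
      rw [Real.sign_of_neg ht, habs, max_eq_right h1, min_eq_left h2]
      push_cast; ring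
    · subst ht; simp at h; linarith
    · have habs : |t| = t := abs_of_pos ht
      have h1 : 0 ≤ t - R := by rw [habs] at h; linarith
      have h2 : 0 ≤ t + R := by positivity
      rw [Real.sign_of_pos ht, habs, max_eq_left h1, min_eq_right h2]
      push_cast; ring

lemma sfun_of_abs_le {R t : ℝ} (h : |t| ≤ R) : sfun R t = 0 := by
  rcases abs_le.mp h with ⟨h1, h2⟩
  unfold sfun
  rw [max_eq_right (by linarith), min_eq_right (by linarith)]
  ring

lemma sfun_of_ge {R t : ℝ} (hR : 0 ≤ R) (h : R ≤ t) : sfun R t = t - R := by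
  unfold sfun
  rw [max_eq_left (by linarith), min_eq_right (by linarith)]
  ring

lemma sfun_of_le {R t : ℝ} (hR : 0 ≤ R) (h : t ≤ -R) : sfun R t = t + R := by
  unfold sfun
  rw [max_eq_right (by linarith), min_eq_left (by linarith)]
  ring

lemma continuous_sfun (R : ℝ) : Continuous (sfun R) := by
  unfold sfun; fun_prop

lemma continuous_stretch (σ₀ : ℝ) {R : ℝ} (hR : 0 ≤ R) : Continuous (stretch σ₀ R) := by
  have : stretch σ₀ R = fun t : ℝ => (t : ℂ) + Complex.I * σ₀ * (sfun R t : ℝ) := by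
    funext t; exact stretch_eq σ₀ hR t
  rw [this]
  exact Complex.continuous_ofReal.add
    (continuous_const.mul (Complex.continuous_ofReal.comp (continuous_sfun R)))

lemma norm_exp_pos (k σ₀ : ℝ) {R : ℝ} (hR : 0 ≤ R) (t : ℝ) :
    ‖Complex.exp (Complex.I * k * stretch σ₀ R t)‖ = Real.exp (-(k * σ₀ * sfun R t)) := by
  rw [stretch_eq σ₀ hR, Complex.norm_exp]
  congr 1
  simp [Complex.mul_re, Complex.mul_im]
  ring

lemma norm_exp_neg (k σ₀ : ℝ) {R : ℝ} (hR : 0 ≤ R) (t : ℝ) :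
    ‖Complex.exp (-(Complex.I * k * stretch σ₀ R t))‖ = Real.exp (k * σ₀ * sfun R t) := by
  rw [stretch_eq σ₀ hR, Complex.norm_exp]
  congr 1
  simp [Complex.mul_re, Complex.mul_im]
  ring

lemma norm_exp_Rtil_pos (k σ₀ R Rh : ℝ) :
    ‖Complex.exp (2 * Complex.I * k * Rtil σ₀ R Rh)‖ =
      Real.exp (-(2 * (k * σ₀ * (Rh - R)))) := by
  rw [Rtil, Complex.norm_exp]
  congr 1
  simp [Complex.mul_re, Complex.mul_im, Complex.sub_re, Complex.sub_im]
  ring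

lemma norm_exp_Rtil_neg (k σ₀ R Rh : ℝ) :
    ‖Complex.exp (-(2 * Complex.I * k * Rtil σ₀ R Rh))‖ =
      Real.exp (2 * (k * σ₀ * (Rh - R))) := by
  rw [Rtil, Complex.norm_exp]
  congr 1
  simp [Complex.mul_re, Complex.mul_im, Complex.sub_re, Complex.sub_im]
  ring

lemma hasDerivAt_sfun {R x : ℝ} (hR : 0 < R) (hx : |x| ≠ R) :
    HasDerivAt (sfun R) (if |x| < R then 0 else 1) x := by
  rcases lt_or_gt_of_ne hx with h | h
  · rw [if_pos h]
    have hev : sfun R =ᶠ[nhds x] fun _ => (0 : ℝ) := by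
      filter_upwards [isOpen_Ioo.mem_nhds
        (show x ∈ Set.Ioo (-R) R from abs_lt.mp h |> fun ⟨a, b⟩ => ⟨a, b⟩)] with t ht
      exact sfun_of_abs_le (abs_le.mpr ⟨ht.1.le, ht.2.le⟩)
    exact (hasDerivAt_const x (0 : ℝ)).congr_of_eventuallyEq hev
  · rw [if_neg (not_lt.mpr h.le)]
    rcases le_or_gt 0 x with hx0 | hx0
    · have hxR : R < x := by rwa [abs_of_nonneg hx0] at h
      have hev : sfun R =ᶠ[nhds x] fun t => id t - R := by
        filter_upwards [isOpen_Ioi.mem_nhds hxR] with t ht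
        exact sfun_of_ge hR.le (le_of_lt ht)
      exact ((hasDerivAt_id x).sub_const R).congr_of_eventuallyEq hev
    · have hxR : x < -R := by rw [abs_of_neg hx0] at h; linarith
      have hev : sfun R =ᶠ[nhds x] fun t => id t + R := by
        filter_upwards [isOpen_Iio.mem_nhds hxR] with t ht
        exact sfun_of_le hR.le (le_of_lt ht)
      exact ((hasDerivAt_id x).add_const R).congr_of_eventuallyEq hev

lemma hasDerivAt_stretch (σ₀ : ℝ) {R x : ℝ} (hR : 0 < R) (hx : |x| ≠ R) :
    HasDerivAt (stretch σ₀ R)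
      (1 + Complex.I * σ₀ * ((if |x| < R then (0 : ℝ) else 1) : ℝ)) x := by
  have h1 := (hasDerivAt_sfun hR hx).ofReal_comp
  have h2 := ((hasDerivAt_id x).ofReal_comp).add (h1.const_mul (Complex.I * σ₀))
  have hfe : (fun t : ℝ => (t : ℂ) + Complex.I * σ₀ * ((sfun R t : ℝ) : ℂ)) = stretch σ₀ R := by
    funext t; exact (stretch_eq σ₀ hR.le t).symm
  simp only [id_eq] at h2
  rw [← hfe]
  exact_mod_cast h2

section Bounds

variable {k σ₀ R Rh : ℝ} {f : ℝ → ℂ}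
variable (hk : 0 < k) (hσ₀ : 0 < σ₀) (hR : 0 < R) (hRRh : R < Rh)
variable (ha : 1 ≤ k * σ₀ * (Rh - R))
variable (hf : ContinuousOn f (Set.Icc (-Rh) Rh))

lemma sfun_le_of_mem (hR0 : 0 ≤ R) (hRRh' : R ≤ Rh) {t : ℝ} (ht : t ≤ Rh) :
    sfun R t ≤ Rh - R := by
  have := sfun_monotone R ht
  rwa [sfun_of_ge hR0 hRRh'] at this

lemma neg_le_sfun_of_mem (hR0 : 0 ≤ R) (hRRh' : R ≤ Rh) {t : ℝ} (ht : -Rh ≤ t) :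
    -(Rh - R) ≤ sfun R t := by
  have := sfun_monotone R ht
  rw [sfun_of_le hR0 (by linarith : -Rh ≤ -R)] at this
  linarith

/-- integrand of `J₂` -/
lemma cont_gp (hf : ContinuousOn f (Set.Icc (-Rh) Rh)) (hR0 : 0 ≤ R) :
    ContinuousOn (fun t => Complex.exp (Complex.I * k * stretch σ₀ R t) * f t)
      (Set.Icc (-Rh) Rh) :=
  ((Complex.continuous_exp.comp
    (continuous_const.mul (continuous_stretch σ₀ hR0))).continuousOn).mul hf

lemma cont_gm (hf : ContinuousOn f (Set.Icc (-Rh) Rh)) (hR0 : 0 ≤ R) :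
    ContinuousOn (fun t => Complex.exp (-(Complex.I * k * stretch σ₀ R t)) * f t)
      (Set.Icc (-Rh) Rh) :=
  ((Complex.continuous_exp.comp
    ((continuous_const.mul (continuous_stretch σ₀ hR0)).neg)).continuousOn).mul hf


lemma exp_prod_le_one {a b : ℝ} (h : a + b ≤ 0) :
    Real.exp a * Real.exp b ≤ 1 := by
  rw [← Real.exp_add]
  calc Real.exp (a + b) ≤ Real.exp 0 := Real.exp_le_exp.mpr h
  _ = 1 := Real.exp_zero

lemma norm_f_ii (hf : ContinuousOn f (Set.Icc (-Rh) Rh)) {a b : ℝ}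
    (h : Set.uIcc a b ⊆ Set.Icc (-Rh) Rh) :
    IntervalIntegrable (fun t => ‖f t‖) volume a b :=
  ((hf.norm).mono h).intervalIntegrable

lemma integral_norm_sub_le (hf : ContinuousOn f (Set.Icc (-Rh) Rh)) {a b : ℝ}
    (h1 : -Rh ≤ a) (h2 : a ≤ b) (h3 : b ≤ Rh) :
    ∫ t in a..b, ‖f t‖ ≤ ∫ t in (-Rh)..Rh, ‖f t‖ := by
  have hab : -Rh ≤ Rh := le_trans h1 (le_trans h2 h3)
  have i1 : IntervalIntegrable (fun t => ‖f t‖) volume (-Rh) a :=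
    norm_f_ii hf (by rw [Set.uIcc_of_le h1]; exact Set.Icc_subset_Icc le_rfl (by linarith))
  have i2 : IntervalIntegrable (fun t => ‖f t‖) volume a b :=
    norm_f_ii hf (by rw [Set.uIcc_of_le h2]; exact Set.Icc_subset_Icc h1 h3)
  have i3 : IntervalIntegrable (fun t => ‖f t‖) volume b Rh :=
    norm_f_ii hf (by rw [Set.uIcc_of_le h3]; exact Set.Icc_subset_Icc (by linarith) le_rfl)
  have e1 := integral_add_adjacent_intervals i1 (i2.trans i3)
  have e2 := integral_add_adjacent_intervals i2 i3
  have n1 : 0 ≤ ∫ t in (-Rh)..a, ‖f t‖ := integral_nonneg h1 fun u _ => norm_nonneg _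
  have n3 : 0 ≤ ∫ t in b..Rh, ‖f t‖ := integral_nonneg h3 fun u _ => norm_nonneg _
  rw [← e1, ← e2]
  linarith

lemma bound_term1 (hk : 0 < k) (hσ₀ : 0 < σ₀) (hR : 0 < R) (hRRh : R < Rh)
    (hf : ContinuousOn f (Set.Icc (-Rh) Rh)) {x : ℝ} (hx : x ∈ Set.Icc (-Rh) Rh) :
    ‖Complex.exp (-(Complex.I * k * stretch σ₀ R x)) *
        ∫ t in x..Rh, Complex.exp (Complex.I * k * stretch σ₀ R t) * f t‖ ≤
      ∫ t in (-Rh)..Rh, ‖f t‖ := by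
  have hxRh : x ≤ Rh := hx.2
  have hmx : -Rh ≤ x := hx.1
  have hsub : Set.uIcc x Rh ⊆ Set.Icc (-Rh) Rh := by
    rw [Set.uIcc_of_le hxRh]; exact Set.Icc_subset_Icc hmx le_rfl
  have hcont := cont_gp (k := k) (σ₀ := σ₀) hf hR.le
  have hii : IntervalIntegrable
      (fun t => Complex.exp (-(Complex.I * k * stretch σ₀ R x)) *
        (Complex.exp (Complex.I * k * stretch σ₀ R t) * f t)) volume x Rh :=
    (continuousOn_const.mul (hcont.mono hsub)).intervalIntegrable
  have hfi : IntervalIntegrable (fun t => ‖f t‖) volume x Rh := norm_f_ii hf hsub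
  rw [← intervalIntegral.integral_const_mul]
  calc ‖∫ t in x..Rh, Complex.exp (-(Complex.I * k * stretch σ₀ R x)) *
          (Complex.exp (Complex.I * k * stretch σ₀ R t) * f t)‖
      ≤ ∫ t in x..Rh, ‖Complex.exp (-(Complex.I * k * stretch σ₀ R x)) *
          (Complex.exp (Complex.I * k * stretch σ₀ R t) * f t)‖ :=
        norm_integral_le_integral_norm hxRh
    _ ≤ ∫ t in x..Rh, ‖f t‖ := by
        apply intervalIntegral.integral_mono_on hxRh hii.norm hfi
        intro t ht
        rw [norm_mul, norm_mul, norm_exp_neg k σ₀ hR.le, norm_exp_pos k σ₀ hR.le]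
        have hst : sfun R x ≤ sfun R t := sfun_monotone R ht.1
        have h1 : Real.exp (k * σ₀ * sfun R x) * Real.exp (-(k * σ₀ * sfun R t)) ≤ 1 :=
          exp_prod_le_one (by nlinarith [mul_pos hk hσ₀])
        have h2 : (0:ℝ) < Real.exp (k * σ₀ * sfun R x) := Real.exp_pos _
        have h3 : (0:ℝ) < Real.exp (-(k * σ₀ * sfun R t)) := Real.exp_pos _
        nlinarith [norm_nonneg (f t)]
    _ ≤ ∫ t in (-Rh)..Rh, ‖f t‖ := integral_norm_sub_le hf hmx hxRh le_rfl

lemma bound_term2 (hk : 0 < k) (hσ₀ : 0 < σ₀) (hR : 0 < R) (hRRh : R < Rh)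
    (hf : ContinuousOn f (Set.Icc (-Rh) Rh)) {x : ℝ} (hx : x ∈ Set.Icc (-Rh) Rh) :
    ‖Complex.exp (Complex.I * k * stretch σ₀ R x) *
        ∫ t in (-Rh)..x, Complex.exp (-(Complex.I * k * stretch σ₀ R t)) * f t‖ ≤
      ∫ t in (-Rh)..Rh, ‖f t‖ := by
  have hxRh : x ≤ Rh := hx.2
  have hmx : -Rh ≤ x := hx.1
  have hsub : Set.uIcc (-Rh) x ⊆ Set.Icc (-Rh) Rh := by
    rw [Set.uIcc_of_le hmx]; exact Set.Icc_subset_Icc le_rfl hxRh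
  have hcont := cont_gm (k := k) (σ₀ := σ₀) hf hR.le
  have hii : IntervalIntegrable
      (fun t => Complex.exp (Complex.I * k * stretch σ₀ R x) *
        (Complex.exp (-(Complex.I * k * stretch σ₀ R t)) * f t)) volume (-Rh) x :=
    (continuousOn_const.mul (hcont.mono hsub)).intervalIntegrable
  have hfi : IntervalIntegrable (fun t => ‖f t‖) volume (-Rh) x := norm_f_ii hf hsub
  rw [← intervalIntegral.integral_const_mul]
  calc ‖∫ t in (-Rh)..x, Complex.exp (Complex.I * k * stretch σ₀ R x) *
          (Complex.exp (-(Complex.I * k * stretch σ₀ R t)) * f t)‖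
      ≤ ∫ t in (-Rh)..x, ‖Complex.exp (Complex.I * k * stretch σ₀ R x) *
          (Complex.exp (-(Complex.I * k * stretch σ₀ R t)) * f t)‖ :=
        norm_integral_le_integral_norm hmx
    _ ≤ ∫ t in (-Rh)..x, ‖f t‖ := by
        apply intervalIntegral.integral_mono_on hmx hii.norm hfi
        intro t ht
        rw [norm_mul, norm_mul, norm_exp_pos k σ₀ hR.le, norm_exp_neg k σ₀ hR.le]
        have hst : sfun R t ≤ sfun R x := sfun_monotone R ht.2
        have h1 : Real.exp (-(k * σ₀ * sfun R x)) * Real.exp (k * σ₀ * sfun R t) ≤ 1 :=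
          exp_prod_le_one (by nlinarith [mul_pos hk hσ₀])
        have h2 : (0:ℝ) < Real.exp (-(k * σ₀ * sfun R x)) := Real.exp_pos _
        have h3 : (0:ℝ) < Real.exp (k * σ₀ * sfun R t) := Real.exp_pos _
        nlinarith [norm_nonneg (f t)]
    _ ≤ ∫ t in (-Rh)..Rh, ‖f t‖ := integral_norm_sub_le hf le_rfl hmx hxRh

lemma norm_inv_2ik (hk : 0 < k) : ‖(1 / (2 * Complex.I * (k:ℂ)))‖ = 1 / (2 * k) := by
  rw [norm_div]
  simp [Complex.norm_real, Real.norm_eq_abs, abs_of_pos hk]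

lemma norm_J1_le (hk : 0 < k) (hσ₀ : 0 < σ₀) (hR : 0 < R) (hRRh : R < Rh)
    (hf : ContinuousOn f (Set.Icc (-Rh) Rh)) :
    ‖J1 k σ₀ R Rh f‖ ≤ Real.exp (k * σ₀ * (Rh - R)) * ∫ t in (-Rh)..Rh, ‖f t‖ := by
  have hRh0 : (0:ℝ) < Rh := hR.trans hRRh
  have hmRh : -Rh ≤ Rh := by linarith
  have hcont := cont_gm (k := k) (σ₀ := σ₀) hf hR.le
  have hii : IntervalIntegrable
      (fun t => Complex.exp (-(Complex.I * k * stretch σ₀ R t)) * f t) volume (-Rh) Rh :=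
    (hcont.mono (by rw [Set.uIcc_of_le hmRh])).intervalIntegrable
  have hfi : IntervalIntegrable (fun t => Real.exp (k * σ₀ * (Rh - R)) * ‖f t‖)
      volume (-Rh) Rh :=
    (norm_f_ii hf (by rw [Set.uIcc_of_le hmRh])).const_mul _
  rw [J1]
  calc ‖∫ t in (-Rh)..Rh, Complex.exp (-(Complex.I * k * stretch σ₀ R t)) * f t‖
      ≤ ∫ t in (-Rh)..Rh, ‖Complex.exp (-(Complex.I * k * stretch σ₀ R t)) * f t‖ :=
        norm_integral_le_integral_norm hmRh
    _ ≤ ∫ t in (-Rh)..Rh, Real.exp (k * σ₀ * (Rh - R)) * ‖f t‖ := by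
        apply intervalIntegral.integral_mono_on hmRh hii.norm hfi
        intro t ht
        rw [norm_mul, norm_exp_neg k σ₀ hR.le]
        have hst : sfun R t ≤ Rh - R := sfun_le_of_mem hR.le hRRh.le ht.2
        have : Real.exp (k * σ₀ * sfun R t) ≤ Real.exp (k * σ₀ * (Rh - R)) :=
          Real.exp_le_exp.mpr (by nlinarith [mul_pos hk hσ₀])
        exact mul_le_mul_of_nonneg_right this (norm_nonneg _)
    _ = Real.exp (k * σ₀ * (Rh - R)) * ∫ t in (-Rh)..Rh, ‖f t‖ := by
        rw [intervalIntegral.integral_const_mul]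

lemma norm_J2_le (hk : 0 < k) (hσ₀ : 0 < σ₀) (hR : 0 < R) (hRRh : R < Rh)
    (hf : ContinuousOn f (Set.Icc (-Rh) Rh)) :
    ‖J2 k σ₀ R Rh f‖ ≤ Real.exp (k * σ₀ * (Rh - R)) * ∫ t in (-Rh)..Rh, ‖f t‖ := by
  have hRh0 : (0:ℝ) < Rh := hR.trans hRRh
  have hmRh : -Rh ≤ Rh := by linarith
  have hcont := cont_gp (k := k) (σ₀ := σ₀) hf hR.le
  have hii : IntervalIntegrable
      (fun t => Complex.exp (Complex.I * k * stretch σ₀ R t) * f t) volume (-Rh) Rh :=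
    (hcont.mono (by rw [Set.uIcc_of_le hmRh])).intervalIntegrable
  have hfi : IntervalIntegrable (fun t => Real.exp (k * σ₀ * (Rh - R)) * ‖f t‖)
      volume (-Rh) Rh :=
    (norm_f_ii hf (by rw [Set.uIcc_of_le hmRh])).const_mul _
  rw [J2]
  calc ‖∫ t in (-Rh)..Rh, Complex.exp (Complex.I * k * stretch σ₀ R t) * f t‖
      ≤ ∫ t in (-Rh)..Rh, ‖Complex.exp (Complex.I * k * stretch σ₀ R t) * f t‖ :=
        norm_integral_le_integral_norm hmRh
    _ ≤ ∫ t in (-Rh)..Rh, Real.exp (k * σ₀ * (Rh - R)) * ‖f t‖ := by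
        apply intervalIntegral.integral_mono_on hmRh hii.norm hfi
        intro t ht
        rw [norm_mul, norm_exp_pos k σ₀ hR.le]
        have hst : -(Rh - R) ≤ sfun R t := neg_le_sfun_of_mem hR.le hRRh.le ht.1
        have : Real.exp (-(k * σ₀ * sfun R t)) ≤ Real.exp (k * σ₀ * (Rh - R)) :=
          Real.exp_le_exp.mpr (by nlinarith [mul_pos hk hσ₀])
        exact mul_le_mul_of_nonneg_right this (norm_nonneg _)
    _ = Real.exp (k * σ₀ * (Rh - R)) * ∫ t in (-Rh)..Rh, ‖f t‖ := by
        rw [intervalIntegral.integral_const_mul]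

lemma denom_lower (hk : 0 < k) (hσ₀ : 0 < σ₀) (hR : 0 < R) (hRRh : R < Rh)
    (ha : 1 ≤ k * σ₀ * (Rh - R)) :
    Real.exp (2 * (k * σ₀ * (Rh - R))) * (4 / 5) ≤
      ‖Complex.exp (2 * Complex.I * k * Rtil σ₀ R Rh) -
        Complex.exp (-(2 * Complex.I * k * Rtil σ₀ R Rh))‖ := by
  set b := k * σ₀ * (Rh - R) with hb
  have h1 : ‖Complex.exp (-(2 * Complex.I * k * Rtil σ₀ R Rh))‖ -
      ‖Complex.exp (2 * Complex.I * k * Rtil σ₀ R Rh)‖ ≤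
      ‖Complex.exp (2 * Complex.I * k * Rtil σ₀ R Rh) -
        Complex.exp (-(2 * Complex.I * k * Rtil σ₀ R Rh))‖ := by
    rw [norm_sub_rev]
    exact norm_sub_norm_le _ _
  rw [norm_exp_Rtil_pos, norm_exp_Rtil_neg] at h1
  have h5 : (5:ℝ) ≤ Real.exp (4 * b) := by
    calc (5:ℝ) = 4 + 1 := by norm_num
    _ ≤ Real.exp 4 := Real.add_one_le_exp 4
    _ ≤ Real.exp (4 * b) := Real.exp_le_exp.mpr (by linarith)
  have hsplit : Real.exp (2 * b) * Real.exp (2 * b) = Real.exp (4 * b) := by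
    rw [← Real.exp_add]; ring_nf
  have hinv : Real.exp (2 * b) * Real.exp (-(2 * b)) = 1 := by
    rw [← Real.exp_add]; ring_nf; exact Real.exp_zero
  have hpos : (0:ℝ) < Real.exp (2 * b) := Real.exp_pos _
  have hpos' : (0:ℝ) < Real.exp (-(2 * b)) := Real.exp_pos _
  nlinarith

lemma bound_D1E (hk : 0 < k) (hσ₀ : 0 < σ₀) (hR : 0 < R) (hRRh : R < Rh)
    (ha : 1 ≤ k * σ₀ * (Rh - R)) (hf : ContinuousOn f (Set.Icc (-Rh) Rh))
    {x : ℝ} (hx : x ∈ Set.Icc (-Rh) Rh) :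
    ‖D1 k σ₀ R Rh f * Complex.exp (-(Complex.I * k * stretch σ₀ R x))‖ ≤
      (5 / (4 * k)) * ∫ t in (-Rh)..Rh, ‖f t‖ := by
  have hM0 : 0 ≤ ∫ t in (-Rh)..Rh, ‖f t‖ :=
    integral_nonneg (by linarith [hR.trans hRRh]) fun u _ => norm_nonneg _
  have j1 := norm_J1_le hk hσ₀ hR hRRh hf
  have j2 := norm_J2_le hk hσ₀ hR hRRh hf
  have he : ‖Complex.exp (2 * Complex.I * k * Rtil σ₀ R Rh)‖ ≤ 1 := by
    rw [norm_exp_Rtil_pos]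
    exact Real.exp_le_one_iff.mpr (by nlinarith)
  have hnum : ‖Complex.exp (2 * Complex.I * k * Rtil σ₀ R Rh) * J2 k σ₀ R Rh f -
      J1 k σ₀ R Rh f‖ ≤
      2 * Real.exp (k * σ₀ * (Rh - R)) * ∫ t in (-Rh)..Rh, ‖f t‖ := by
    have t0 := norm_sub_le (Complex.exp (2 * Complex.I * k * Rtil σ₀ R Rh) * J2 k σ₀ R Rh f)
      (J1 k σ₀ R Rh f)
    have t1 : ‖Complex.exp (2 * Complex.I * k * Rtil σ₀ R Rh) * J2 k σ₀ R Rh f‖ ≤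
        1 * (Real.exp (k * σ₀ * (Rh - R)) * ∫ t in (-Rh)..Rh, ‖f t‖) := by
      rw [norm_mul]
      exact mul_le_mul he j2 (norm_nonneg _) one_pos.le
    nlinarith
  have hden := denom_lower hk hσ₀ hR hRRh ha
  have hEx : ‖Complex.exp (-(Complex.I * k * stretch σ₀ R x))‖ ≤
      Real.exp (k * σ₀ * (Rh - R)) := by
    rw [norm_exp_neg k σ₀ hR.le]
    apply Real.exp_le_exp.mpr
    nlinarith [sfun_le_of_mem hR.le hRRh.le hx.2, mul_pos hk hσ₀]
  rw [D1, norm_mul, norm_div, norm_mul, norm_inv_2ik hk]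
  have hden0 : (0:ℝ) <
      ‖Complex.exp (2 * Complex.I * k * Rtil σ₀ R Rh) -
        Complex.exp (-(2 * Complex.I * k * Rtil σ₀ R Rh))‖ :=
    lt_of_lt_of_le (by positivity) hden
  rw [div_mul_eq_mul_div, div_le_iff₀ hden0]
  have step1 : 1 / (2 * k) * ‖Complex.exp (2 * Complex.I * k * Rtil σ₀ R Rh) * J2 k σ₀ R Rh f -
      J1 k σ₀ R Rh f‖ * ‖Complex.exp (-(Complex.I * k * stretch σ₀ R x))‖ ≤
      1 / (2 * k) * (2 * Real.exp (k * σ₀ * (Rh - R)) * ∫ t in (-Rh)..Rh, ‖f t‖) *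
        Real.exp (k * σ₀ * (Rh - R)) :=
    mul_le_mul (mul_le_mul_of_nonneg_left hnum (by positivity)) hEx (norm_nonneg _)
      (by positivity)
  have step2 : 5 / (4 * k) * (∫ t in (-Rh)..Rh, ‖f t‖) *
      (Real.exp (2 * (k * σ₀ * (Rh - R))) * (4 / 5)) ≤
      5 / (4 * k) * (∫ t in (-Rh)..Rh, ‖f t‖) *
        ‖Complex.exp (2 * Complex.I * k * Rtil σ₀ R Rh) -
          Complex.exp (-(2 * Complex.I * k * Rtil σ₀ R Rh))‖ :=
    mul_le_mul_of_nonneg_left hden (by positivity)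
  refine step1.trans (le_trans (le_of_eq ?_) step2)
  have hexp : Real.exp (k * σ₀ * (Rh - R)) * Real.exp (k * σ₀ * (Rh - R)) =
      Real.exp (2 * (k * σ₀ * (Rh - R))) := by
    rw [← Real.exp_add]; ring_nf
  rw [← hexp]
  field_simp

lemma bound_D2E (hk : 0 < k) (hσ₀ : 0 < σ₀) (hR : 0 < R) (hRRh : R < Rh)
    (ha : 1 ≤ k * σ₀ * (Rh - R)) (hf : ContinuousOn f (Set.Icc (-Rh) Rh))
    {x : ℝ} (hx : x ∈ Set.Icc (-Rh) Rh) :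
    ‖D2 k σ₀ R Rh f * Complex.exp (Complex.I * k * stretch σ₀ R x)‖ ≤
      (5 / (4 * k)) * ∫ t in (-Rh)..Rh, ‖f t‖ := by
  have hM0 : 0 ≤ ∫ t in (-Rh)..Rh, ‖f t‖ :=
    integral_nonneg (by linarith [hR.trans hRRh]) fun u _ => norm_nonneg _
  have j1 := norm_J1_le hk hσ₀ hR hRRh hf
  have j2 := norm_J2_le hk hσ₀ hR hRRh hf
  have he : ‖Complex.exp (2 * Complex.I * k * Rtil σ₀ R Rh)‖ ≤ 1 := by
    rw [norm_exp_Rtil_pos]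
    exact Real.exp_le_one_iff.mpr (by nlinarith)
  have hnum : ‖Complex.exp (2 * Complex.I * k * Rtil σ₀ R Rh) * J1 k σ₀ R Rh f -
      J2 k σ₀ R Rh f‖ ≤
      2 * Real.exp (k * σ₀ * (Rh - R)) * ∫ t in (-Rh)..Rh, ‖f t‖ := by
    have t0 := norm_sub_le (Complex.exp (2 * Complex.I * k * Rtil σ₀ R Rh) * J1 k σ₀ R Rh f)
      (J2 k σ₀ R Rh f)
    have t1 : ‖Complex.exp (2 * Complex.I * k * Rtil σ₀ R Rh) * J1 k σ₀ R Rh f‖ ≤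
        1 * (Real.exp (k * σ₀ * (Rh - R)) * ∫ t in (-Rh)..Rh, ‖f t‖) := by
      rw [norm_mul]
      exact mul_le_mul he j1 (norm_nonneg _) one_pos.le
    nlinarith
  have hden := denom_lower hk hσ₀ hR hRRh ha
  have hEx : ‖Complex.exp (Complex.I * k * stretch σ₀ R x)‖ ≤
      Real.exp (k * σ₀ * (Rh - R)) := by
    rw [norm_exp_pos k σ₀ hR.le]
    apply Real.exp_le_exp.mpr
    nlinarith [neg_le_sfun_of_mem hR.le hRRh.le hx.1, mul_pos hk hσ₀]
  rw [D2, norm_mul, norm_div, norm_mul, norm_inv_2ik hk]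
  have hden0 : (0:ℝ) <
      ‖Complex.exp (2 * Complex.I * k * Rtil σ₀ R Rh) -
        Complex.exp (-(2 * Complex.I * k * Rtil σ₀ R Rh))‖ :=
    lt_of_lt_of_le (by positivity) hden
  rw [div_mul_eq_mul_div, div_le_iff₀ hden0]
  have step1 : 1 / (2 * k) * ‖Complex.exp (2 * Complex.I * k * Rtil σ₀ R Rh) * J1 k σ₀ R Rh f -
      J2 k σ₀ R Rh f‖ * ‖Complex.exp (Complex.I * k * stretch σ₀ R x)‖ ≤
      1 / (2 * k) * (2 * Real.exp (k * σ₀ * (Rh - R)) * ∫ t in (-Rh)..Rh, ‖f t‖) *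
        Real.exp (k * σ₀ * (Rh - R)) :=
    mul_le_mul (mul_le_mul_of_nonneg_left hnum (by positivity)) hEx (norm_nonneg _)
      (by positivity)
  have step2 : 5 / (4 * k) * (∫ t in (-Rh)..Rh, ‖f t‖) *
      (Real.exp (2 * (k * σ₀ * (Rh - R))) * (4 / 5)) ≤
      5 / (4 * k) * (∫ t in (-Rh)..Rh, ‖f t‖) *
        ‖Complex.exp (2 * Complex.I * k * Rtil σ₀ R Rh) -
          Complex.exp (-(2 * Complex.I * k * Rtil σ₀ R Rh))‖ :=
    mul_le_mul_of_nonneg_left hden (by positivity)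
  refine step1.trans (le_trans (le_of_eq ?_) step2)
  have hexp : Real.exp (k * σ₀ * (Rh - R)) * Real.exp (k * σ₀ * (Rh - R)) =
      Real.exp (2 * (k * σ₀ * (Rh - R))) := by
    rw [← Real.exp_add]; ring_nf
  rw [← hexp]
  field_simp

/-- the value of the derivative of `uhat` -/
def W (k σ₀ R Rh : ℝ) (f : ℝ → ℂ) (x : ℝ) : ℂ :=
  Complex.I * k * (1 + Complex.I * σ₀ * ((if |x| < R then (0 : ℝ) else 1) : ℝ)) *
    ((1 / (2 * Complex.I * k)) * Complex.exp (-(Complex.I * k * stretch σ₀ R x)) *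
        (∫ t in x..Rh, Complex.exp (Complex.I * k * stretch σ₀ R t) * f t)
      - (1 / (2 * Complex.I * k)) * Complex.exp (Complex.I * k * stretch σ₀ R x) *
        (∫ t in (-Rh)..x, Complex.exp (-(Complex.I * k * stretch σ₀ R t)) * f t)
      - D1 k σ₀ R Rh f * Complex.exp (-(Complex.I * k * stretch σ₀ R x))
      + D2 k σ₀ R Rh f * Complex.exp (Complex.I * k * stretch σ₀ R x))

lemma hasDerivAt_uhat (hk : 0 < k) (hσ₀ : 0 < σ₀) (hR : 0 < R) (hRRh : R < Rh)
    (hf : ContinuousOn f (Set.Icc (-Rh) Rh)) {x : ℝ} (hx : x ∈ Set.Ioo (-Rh) Rh)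
    (hxR : |x| ≠ R) :
    HasDerivAt (uhat k σ₀ R Rh f) (W k σ₀ R Rh f x) x := by
  have hIcc : Set.Icc (-Rh) Rh ∈ nhds x := Icc_mem_nhds hx.1 hx.2
  have hstretch := hasDerivAt_stretch σ₀ hR hxR
  have hinner : HasDerivAt (fun y => Complex.I * (k : ℂ) * stretch σ₀ R y)
      (Complex.I * (k : ℂ) *
        (1 + Complex.I * σ₀ * ((if |x| < R then (0 : ℝ) else 1) : ℝ))) x :=
    hstretch.const_mul (Complex.I * (k : ℂ))
  have hEm : HasDerivAt (fun y => Complex.exp (-(Complex.I * (k : ℂ) * stretch σ₀ R y)))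
      (Complex.exp (-(Complex.I * (k : ℂ) * stretch σ₀ R x)) *
        -(Complex.I * (k : ℂ) *
          (1 + Complex.I * σ₀ * ((if |x| < R then (0 : ℝ) else 1) : ℝ)))) x :=
    hinner.neg.cexp
  have hEp : HasDerivAt (fun y => Complex.exp (Complex.I * (k : ℂ) * stretch σ₀ R y))
      (Complex.exp (Complex.I * (k : ℂ) * stretch σ₀ R x) *
        (Complex.I * (k : ℂ) *
          (1 + Complex.I * σ₀ * ((if |x| < R then (0 : ℝ) else 1) : ℝ)))) x :=
    hinner.cexp
  have hcontp := cont_gp (k := k) (σ₀ := σ₀) hf hR.le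
  have hcontm := cont_gm (k := k) (σ₀ := σ₀) hf hR.le
  have hss1 : Set.uIcc x Rh ⊆ Set.Icc (-Rh) Rh := by
    rw [Set.uIcc_of_le hx.2.le]
    exact Set.Icc_subset_Icc hx.1.le le_rfl
  have hss2 : Set.uIcc (-Rh) x ⊆ Set.Icc (-Rh) Rh := by
    rw [Set.uIcc_of_le hx.1.le]
    exact Set.Icc_subset_Icc le_rfl hx.2.le
  have hG : HasDerivAt (fun y => ∫ t in y..Rh, Complex.exp (Complex.I * k * stretch σ₀ R t) * f t)
      (-(Complex.exp (Complex.I * k * stretch σ₀ R x) * f x)) x := by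
    apply intervalIntegral.integral_hasDerivAt_left
    · exact (hcontp.mono hss1).intervalIntegrable
    · exact ContinuousOn.stronglyMeasurableAtFilter isOpen_Ioo
        (hcontp.mono Set.Ioo_subset_Icc_self) x hx
    · exact (hcontp x (Set.Ioo_subset_Icc_self hx)).continuousAt hIcc
  have hH : HasDerivAt
      (fun y => ∫ t in (-Rh)..y, Complex.exp (-(Complex.I * k * stretch σ₀ R t)) * f t)
      (Complex.exp (-(Complex.I * k * stretch σ₀ R x)) * f x) x := by
    apply intervalIntegral.integral_hasDerivAt_right
    · exact (hcontm.mono hss2).intervalIntegrable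
    · exact ContinuousOn.stronglyMeasurableAtFilter isOpen_Ioo
        (hcontm.mono Set.Ioo_subset_Icc_self) x hx
    · exact (hcontm x (Set.Ioo_subset_Icc_self hx)).continuousAt hIcc
  have h1 := (hEm.const_mul (-(1 / (2 * Complex.I * (k : ℂ))))).mul hG
  have h2 := (hEp.const_mul ((1 / (2 * Complex.I * (k : ℂ))))).mul hH
  have h3 := hEm.const_mul (D1 k σ₀ R Rh f)
  have h4 := hEp.const_mul (D2 k σ₀ R Rh f)
  have hAll := ((h1.sub h2).add h3).add h4
  have hfun : (fun y =>
      (-(1 / (2 * Complex.I * (k : ℂ))) * Complex.exp (-(Complex.I * (k : ℂ) * stretch σ₀ R y)) *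
        ∫ t in y..Rh, Complex.exp (Complex.I * k * stretch σ₀ R t) * f t) -
      ((1 / (2 * Complex.I * (k : ℂ))) * Complex.exp (Complex.I * (k : ℂ) * stretch σ₀ R y) *
        ∫ t in (-Rh)..y, Complex.exp (-(Complex.I * k * stretch σ₀ R t)) * f t) +
      D1 k σ₀ R Rh f * Complex.exp (-(Complex.I * (k : ℂ) * stretch σ₀ R y)) +
      D2 k σ₀ R Rh f * Complex.exp (Complex.I * (k : ℂ) * stretch σ₀ R y)) =
      uhat k σ₀ R Rh f := by
    funext y
    rw [uhat]
  rw [← hfun]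
  convert hAll using 1
  · rfl
  · rfl
  rw [W]
  ring

lemma norm_W_le (hk : 0 < k) (hσ₀ : 0 < σ₀) (hR : 0 < R) (hRRh : R < Rh)
    (ha : 1 ≤ k * σ₀ * (Rh - R)) (hf : ContinuousOn f (Set.Icc (-Rh) Rh))
    {x : ℝ} (hx : x ∈ Set.Icc (-Rh) Rh) :
    ‖W k σ₀ R Rh f x‖ ≤ (7 / 2) * (1 + σ₀) * ∫ t in (-Rh)..Rh, ‖f t‖ := by
  have hM0 : 0 ≤ ∫ t in (-Rh)..Rh, ‖f t‖ :=
    integral_nonneg (by linarith [hR.trans hRRh]) fun u _ => norm_nonneg _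
  rw [W, norm_mul]
  have hα : ‖Complex.I * (k : ℂ) *
      (1 + Complex.I * σ₀ * ((if |x| < R then (0 : ℝ) else 1) : ℝ))‖ ≤ k * (1 + σ₀) := by
    rw [norm_mul, norm_mul, Complex.norm_I, one_mul, Complex.norm_real,
      Real.norm_eq_abs, abs_of_pos hk]
    have h1 : ‖(1 : ℂ) + Complex.I * σ₀ * ((if |x| < R then (0 : ℝ) else 1) : ℝ)‖ ≤ 1 + σ₀ := by
      refine le_trans (norm_add_le _ _) ?_
      rw [norm_one, norm_mul, norm_mul, Complex.norm_I, one_mul, Complex.norm_real,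
        Complex.norm_real, Real.norm_eq_abs, Real.norm_eq_abs, abs_of_pos hσ₀]
      have : |(if |x| < R then (0 : ℝ) else 1)| ≤ 1 := by split_ifs <;> norm_num
      nlinarith
    exact mul_le_mul_of_nonneg_left h1 hk.le
  have hS : ‖(1 / (2 * Complex.I * (k : ℂ))) * Complex.exp (-(Complex.I * k * stretch σ₀ R x)) *
        (∫ t in x..Rh, Complex.exp (Complex.I * k * stretch σ₀ R t) * f t)
      - (1 / (2 * Complex.I * (k : ℂ))) * Complex.exp (Complex.I * k * stretch σ₀ R x) *
        (∫ t in (-Rh)..x, Complex.exp (-(Complex.I * k * stretch σ₀ R t)) * f t)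
      - D1 k σ₀ R Rh f * Complex.exp (-(Complex.I * k * stretch σ₀ R x))
      + D2 k σ₀ R Rh f * Complex.exp (Complex.I * k * stretch σ₀ R x)‖ ≤
      (7 / (2 * k)) * ∫ t in (-Rh)..Rh, ‖f t‖ := by
    have b1 := bound_term1 hk hσ₀ hR hRRh hf hx
    have b2 := bound_term2 hk hσ₀ hR hRRh hf hx
    have b3 := bound_D1E hk hσ₀ hR hRRh ha hf hx
    have b4 := bound_D2E hk hσ₀ hR hRRh ha hf hx
    have n1 : ‖(1 / (2 * Complex.I * (k : ℂ))) *
        Complex.exp (-(Complex.I * k * stretch σ₀ R x)) *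
        (∫ t in x..Rh, Complex.exp (Complex.I * k * stretch σ₀ R t) * f t)‖ ≤
        (1 / (2 * k)) * ∫ t in (-Rh)..Rh, ‖f t‖ := by
      rw [mul_assoc, norm_mul, norm_inv_2ik hk]
      exact mul_le_mul_of_nonneg_left b1 (by positivity)
    have n2 : ‖(1 / (2 * Complex.I * (k : ℂ))) *
        Complex.exp (Complex.I * k * stretch σ₀ R x) *
        (∫ t in (-Rh)..x, Complex.exp (-(Complex.I * k * stretch σ₀ R t)) * f t)‖ ≤
        (1 / (2 * k)) * ∫ t in (-Rh)..Rh, ‖f t‖ := by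
      rw [mul_assoc, norm_mul, norm_inv_2ik hk]
      exact mul_le_mul_of_nonneg_left b2 (by positivity)
    refine le_trans (norm_add_le _ _) ?_
    have hsub : ‖(1 / (2 * Complex.I * (k : ℂ))) *
          Complex.exp (-(Complex.I * k * stretch σ₀ R x)) *
          (∫ t in x..Rh, Complex.exp (Complex.I * k * stretch σ₀ R t) * f t)
        - (1 / (2 * Complex.I * (k : ℂ))) * Complex.exp (Complex.I * k * stretch σ₀ R x) *
          (∫ t in (-Rh)..x, Complex.exp (-(Complex.I * k * stretch σ₀ R t)) * f t)
        - D1 k σ₀ R Rh f * Complex.exp (-(Complex.I * k * stretch σ₀ R x))‖ ≤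
        (1 / (2 * k)) * (∫ t in (-Rh)..Rh, ‖f t‖) +
        (1 / (2 * k)) * (∫ t in (-Rh)..Rh, ‖f t‖) +
        (5 / (4 * k)) * (∫ t in (-Rh)..Rh, ‖f t‖) := by
      refine le_trans (norm_sub_le _ _) ?_
      have := le_trans (norm_sub_le ((1 / (2 * Complex.I * (k : ℂ))) *
          Complex.exp (-(Complex.I * k * stretch σ₀ R x)) *
          (∫ t in x..Rh, Complex.exp (Complex.I * k * stretch σ₀ R t) * f t))
        ((1 / (2 * Complex.I * (k : ℂ))) * Complex.exp (Complex.I * k * stretch σ₀ R x) *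
          (∫ t in (-Rh)..x, Complex.exp (-(Complex.I * k * stretch σ₀ R t)) * f t)))
        (add_le_add n1 n2)
      linarith
    have total := add_le_add hsub b4
    refine le_trans total (le_of_eq ?_)
    field_simp
    ring
  calc ‖Complex.I * (k : ℂ) *
        (1 + Complex.I * σ₀ * ((if |x| < R then (0 : ℝ) else 1) : ℝ))‖ * _ ≤
      (k * (1 + σ₀)) * ((7 / (2 * k)) * ∫ t in (-Rh)..Rh, ‖f t‖) :=
        mul_le_mul hα hS (norm_nonneg _) (by positivity)
    _ = (7 / 2) * (1 + σ₀) * ∫ t in (-Rh)..Rh, ‖f t‖ := by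
        field_simp

lemma norm_uhat_le (hk : 0 < k) (hσ₀ : 0 < σ₀) (hR : 0 < R) (hRRh : R < Rh)
    (ha : 1 ≤ k * σ₀ * (Rh - R)) (hf : ContinuousOn f (Set.Icc (-Rh) Rh))
    {x : ℝ} (hx : x ∈ Set.Icc (-Rh) Rh) :
    ‖uhat k σ₀ R Rh f x‖ ≤ (7 / (2 * k)) * ∫ t in (-Rh)..Rh, ‖f t‖ := by
  have b1 := bound_term1 hk hσ₀ hR hRRh hf hx
  have b2 := bound_term2 hk hσ₀ hR hRRh hf hx
  have b3 := bound_D1E hk hσ₀ hR hRRh ha hf hx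
  have b4 := bound_D2E hk hσ₀ hR hRRh ha hf hx
  rw [uhat]
  have n1 : ‖-(1 / (2 * Complex.I * (k : ℂ))) *
      Complex.exp (-(Complex.I * k * stretch σ₀ R x)) *
      (∫ t in x..Rh, Complex.exp (Complex.I * k * stretch σ₀ R t) * f t)‖ ≤
      (1 / (2 * k)) * ∫ t in (-Rh)..Rh, ‖f t‖ := by
    rw [mul_assoc, norm_mul, norm_neg, norm_inv_2ik hk]
    exact mul_le_mul_of_nonneg_left b1 (by positivity)
  have n2 : ‖(1 / (2 * Complex.I * (k : ℂ))) *
      Complex.exp (Complex.I * k * stretch σ₀ R x) *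
      (∫ t in (-Rh)..x, Complex.exp (-(Complex.I * k * stretch σ₀ R t)) * f t)‖ ≤
      (1 / (2 * k)) * ∫ t in (-Rh)..Rh, ‖f t‖ := by
    rw [mul_assoc, norm_mul, norm_inv_2ik hk]
    exact mul_le_mul_of_nonneg_left b2 (by positivity)
  have habc : ∀ (a b c d : ℂ), ‖a - b + c + d‖ ≤ ‖a‖ + ‖b‖ + ‖c‖ + ‖d‖ := by
    intro a b c d
    have h1 := norm_add_le (a - b + c) d
    have h2 := norm_add_le (a - b) c
    have h3 := norm_sub_le a b
    linarith
  refine le_trans (habc _ _ _ _) ?_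
  have harith : (1 / (2 * k) * ∫ t in (-Rh)..Rh, ‖f t‖) +
      (1 / (2 * k) * ∫ t in (-Rh)..Rh, ‖f t‖) +
      (5 / (4 * k) * ∫ t in (-Rh)..Rh, ‖f t‖) +
      (5 / (4 * k) * ∫ t in (-Rh)..Rh, ‖f t‖) =
      7 / (2 * k) * ∫ t in (-Rh)..Rh, ‖f t‖ := by
    field_simp
    ring
  linarith [n1, n2, b3, b4]

lemma cauchy_schwarz_f (hRh0 : 0 < Rh) (hf : ContinuousOn f (Set.Icc (-Rh) Rh)) :
    (∫ t in (-Rh)..Rh, ‖f t‖) ^ 2 ≤ (2 * Rh) * ∫ t in (-Rh)..Rh, ‖f t‖ ^ 2 := by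
  have hmRh : -Rh ≤ Rh := by linarith
  have i1 : IntervalIntegrable (fun t => ‖f t‖) volume (-Rh) Rh :=
    norm_f_ii hf (by rw [Set.uIcc_of_le hmRh])
  have i2 : IntervalIntegrable (fun t => ‖f t‖ ^ 2) volume (-Rh) Rh :=
    (((hf.norm).pow 2).mono (by rw [Set.uIcc_of_le hmRh])).intervalIntegrable
  set M := ∫ t in (-Rh)..Rh, ‖f t‖ with hM
  set Q := ∫ t in (-Rh)..Rh, ‖f t‖ ^ 2 with hQ
  set c := M / (2 * Rh) with hc
  have h0 : 0 ≤ ∫ t in (-Rh)..Rh, (‖f t‖ - c) ^ 2 :=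
    integral_nonneg hmRh fun u _ => sq_nonneg _
  have hcongr : ∫ t in (-Rh)..Rh, (‖f t‖ - c) ^ 2 =
      ∫ t in (-Rh)..Rh, (‖f t‖ ^ 2 - 2 * c * ‖f t‖ + c ^ 2) := by
    apply intervalIntegral.integral_congr
    intro t _
    ring
  have hsplit : ∫ t in (-Rh)..Rh, (‖f t‖ ^ 2 - 2 * c * ‖f t‖ + c ^ 2) =
      Q - 2 * c * M + c ^ 2 * (2 * Rh) := by
    rw [intervalIntegral.integral_add (i2.sub (i1.const_mul (2 * c)))
      intervalIntegrable_const,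
      intervalIntegral.integral_sub i2 (i1.const_mul (2 * c)),
      intervalIntegral.integral_const_mul, intervalIntegral.integral_const]
    rw [smul_eq_mul]
    ring
  rw [hcongr, hsplit] at h0
  have hcM : c * (2 * Rh) = M := by
    rw [hc]; field_simp
  nlinarith [sq_nonneg M, sq_nonneg c]

end Bounds

end PML1d

/-- One-dimensional case of Corollary 3.2 (energy-norm stability of the truncated PML
problem): there is a constant `C > 0` depending only on `σ₀` such that for all `k > 0`,
`0 < R < R̂ ≤ 2` with `k σ₀ L ≥ 1` and all continuous `f : [−R̂, R̂] → ℂ`, the truncated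
PML solution `û` is differentiable at every `x ∈ (−R̂, R̂)` with `|x| ≠ R` and satisfies
`(∫_{(−R̂,R̂)∖{−R,R}} |û′|² + k² ∫_{−R̂}^{R̂} |û|²)^{1/2} ≤ C (∫_{−R̂}^{R̂} |f|²)^{1/2}`. -/
theorem pml_energy_stability_1d (σ₀ : ℝ) (hσ₀ : 0 < σ₀) :
    ∃ C : ℝ, 0 < C ∧
      ∀ (k R Rh : ℝ) (f : ℝ → ℂ),
        0 < k → 0 < R → R < Rh → Rh ≤ 2 → 1 ≤ k * σ₀ * (Rh - R) →
        ContinuousOn f (Set.Icc (-Rh) Rh) →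
        (∀ x ∈ Set.Ioo (-Rh) Rh, |x| ≠ R → DifferentiableAt ℝ (uhat k σ₀ R Rh f) x) ∧
        Real.sqrt ((∫ x in Set.Ioo (-Rh) Rh \ {-R, R}, ‖deriv (uhat k σ₀ R Rh f) x‖ ^ 2) +
            k ^ 2 * ∫ x in (-Rh)..Rh, ‖uhat k σ₀ R Rh f x‖ ^ 2) ≤
          C * Real.sqrt (∫ x in (-Rh)..Rh, ‖f x‖ ^ 2) := by
  refine ⟨20 * (1 + σ₀), by positivity, ?_⟩
  intro k R Rh f hk hR hRRh hRh2 ha hf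
  have hRh0 : (0:ℝ) < Rh := hR.trans hRRh
  have hmRh : -Rh ≤ Rh := by linarith
  constructor
  · intro x hx hxR
    exact (PML1d.hasDerivAt_uhat hk hσ₀ hR hRRh hf hx hxR).differentiableAt
  set M := ∫ t in (-Rh)..Rh, ‖f t‖ with hMdef
  set Q := ∫ t in (-Rh)..Rh, ‖f t‖ ^ 2 with hQdef
  have hM0 : 0 ≤ M := integral_nonneg hmRh fun u _ => norm_nonneg _
  have hQ0 : 0 ≤ Q := integral_nonneg hmRh fun u _ => sq_nonneg _
  have hM2 : M ^ 2 ≤ (2 * Rh) * Q := PML1d.cauchy_schwarz_f hRh0 hf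
  have hM2' : M ^ 2 ≤ 4 * Q := by nlinarith
  set s : Set ℝ := Set.Ioo (-Rh) Rh \ {-R, R} with hsdef
  have hsm : MeasurableSet s :=
    measurableSet_Ioo.diff ((measurableSet_singleton R).insert (-R))
  have hvol1 : volume s ≤ ENNReal.ofReal (Rh - -Rh) := by
    refine le_trans (measure_mono Set.diff_subset) ?_
    rw [Real.volume_Ioo]
  have hfin : volume s < ⊤ := lt_of_le_of_lt hvol1 ENNReal.ofReal_lt_top
  have hvol : (volume s).toReal ≤ 2 * Rh := by
    refine le_trans (ENNReal.toReal_mono ENNReal.ofReal_ne_top hvol1) ?_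
    rw [ENNReal.toReal_ofReal (by linarith)]
    linarith
  -- pointwise bound on the derivative on s
  have hptw : ∀ x ∈ s, ‖‖deriv (uhat k σ₀ R Rh f) x‖ ^ 2‖ ≤
      ((7 / 2) * (1 + σ₀) * M) ^ 2 := by
    intro x hx
    obtain ⟨hx1, hx2⟩ := hx
    have hxR : |x| ≠ R := by
      intro habs
      rcases (abs_eq hR.le).mp habs with h | h
      · exact hx2 (by simp [h])
      · exact hx2 (by simp [h])
    have hd := (PML1d.hasDerivAt_uhat hk hσ₀ hR hRRh hf hx1 hxR).deriv
    rw [Real.norm_eq_abs, abs_of_nonneg (by positivity), hd]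
    exact pow_le_pow_left₀ (norm_nonneg _)
      (PML1d.norm_W_le hk hσ₀ hR hRRh ha hf (Set.Ioo_subset_Icc_self hx1)) 2
  have hS1 : (∫ x in s, ‖deriv (uhat k σ₀ R Rh f) x‖ ^ 2) ≤ 49 * (1 + σ₀) ^ 2 * M ^ 2 := by
    have h1 := norm_setIntegral_le_of_norm_le_const (μ := volume) hfin hptw
    have h2 : (∫ x in s, ‖deriv (uhat k σ₀ R Rh f) x‖ ^ 2) ≤
        ‖∫ x in s, ‖deriv (uhat k σ₀ R Rh f) x‖ ^ 2‖ := le_abs_self _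
    have h3 : ((7 / 2) * (1 + σ₀) * M) ^ 2 * (volume s).toReal ≤
        ((7 / 2) * (1 + σ₀) * M) ^ 2 * 4 := by
      refine mul_le_mul_of_nonneg_left ?_ (by positivity)
      linarith
    calc (∫ x in s, ‖deriv (uhat k σ₀ R Rh f) x‖ ^ 2) ≤
        ((7 / 2) * (1 + σ₀) * M) ^ 2 * (volume s).toReal := le_trans h2 h1
      _ ≤ ((7 / 2) * (1 + σ₀) * M) ^ 2 * 4 := h3
      _ = 49 * (1 + σ₀) ^ 2 * M ^ 2 := by ring
  have hptw2 : ∀ x ∈ Set.uIoc (-Rh) Rh, ‖‖uhat k σ₀ R Rh f x‖ ^ 2‖ ≤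
      ((7 / (2 * k)) * M) ^ 2 := by
    intro x hx
    rw [Set.uIoc_of_le hmRh] at hx
    have hxIcc : x ∈ Set.Icc (-Rh) Rh := ⟨hx.1.le, hx.2⟩
    rw [Real.norm_eq_abs, abs_of_nonneg (by positivity)]
    exact pow_le_pow_left₀ (norm_nonneg _)
      (PML1d.norm_uhat_le hk hσ₀ hR hRRh ha hf hxIcc) 2
  have hS2 : (∫ x in (-Rh)..Rh, ‖uhat k σ₀ R Rh f x‖ ^ 2) ≤
      ((7 / (2 * k)) * M) ^ 2 * (2 * Rh) := by
    have h1 := intervalIntegral.norm_integral_le_of_norm_le_const hptw2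
    have h2 : |Rh - -Rh| = 2 * Rh := by
      rw [abs_of_pos (by linarith)]
      ring
    rw [h2] at h1
    exact le_trans (le_abs_self _) h1
  have hS2k : k ^ 2 * (∫ x in (-Rh)..Rh, ‖uhat k σ₀ R Rh f x‖ ^ 2) ≤ 49 * M ^ 2 := by
    have h1 : k ^ 2 * (∫ x in (-Rh)..Rh, ‖uhat k σ₀ R Rh f x‖ ^ 2) ≤
        k ^ 2 * (((7 / (2 * k)) * M) ^ 2 * (2 * Rh)) :=
      mul_le_mul_of_nonneg_left hS2 (by positivity)
    refine le_trans h1 ?_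
    have h2 : k ^ 2 * (((7 / (2 * k)) * M) ^ 2 * (2 * Rh)) =
        (49 / 4) * M ^ 2 * (2 * Rh) := by
      field_simp
      ring
    rw [h2]
    nlinarith [sq_nonneg M]
  have htot : (∫ x in s, ‖deriv (uhat k σ₀ R Rh f) x‖ ^ 2) +
      k ^ 2 * (∫ x in (-Rh)..Rh, ‖uhat k σ₀ R Rh f x‖ ^ 2) ≤
      (20 * (1 + σ₀)) ^ 2 * Q := by
    have hfact : (1:ℝ) ≤ (1 + σ₀) ^ 2 := by nlinarith
    nlinarith [mul_le_mul_of_nonneg_left hM2' (show (0:ℝ) ≤ 49 * (1 + σ₀) ^ 2 by positivity),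
      mul_le_mul_of_nonneg_left hQ0 (show (0:ℝ) ≤ 49 * ((1 + σ₀) ^ 2 - 1) by nlinarith)]
  calc Real.sqrt ((∫ x in s, ‖deriv (uhat k σ₀ R Rh f) x‖ ^ 2) +
        k ^ 2 * ∫ x in (-Rh)..Rh, ‖uhat k σ₀ R Rh f x‖ ^ 2) ≤
      Real.sqrt ((20 * (1 + σ₀)) ^ 2 * Q) := Real.sqrt_le_sqrt htot
    _ = 20 * (1 + σ₀) * Real.sqrt Q := by
        rw [Real.sqrt_mul (by positivity), Real.sqrt_sq (by positivity)]

end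
end

section
/- One-dimensional case of Corollary 3.5 (H²-estimate for the truncated PML problem): There exists a constant C > 0 depending only on σ₀ such that for all k ≥ 1, 0 < R < R̂ with R̂ ≤ 2 and k·σ₀·L ≥ 1 (where L = R̂ − R), and all continuous f : [−R̂, R̂] → ℂ, the truncated PML solution û is twice differentiable at every x ∈ (−R̂, R̂) with |x| ≠ R and satisfies (∫_{(−R̂,R̂)∖{−R,R}} |û″(x)|² dx)^{1/2} ≤ C k (∫_{−R̂}^{R̂} |f(x)|² dx)^{1/2}. -/
open MeasureTheory intervalIntegral

noncomputable section

namespace PML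

/-- imaginary part profile of the stretching -/
def mfun (σ₀ R t : ℝ) : ℝ := σ₀ * (max (t - R) 0 + min (t + R) 0)

lemma stretch_eq {σ₀ R : ℝ} (hR : 0 < R) (t : ℝ) :
    stretch σ₀ R t = (t : ℂ) + Complex.I * (mfun σ₀ R t : ℂ) := by
  unfold stretch mfun
  rcases le_or_gt |t| R with h | h
  · rw [if_pos h]
    rw [abs_le] at h
    rw [max_eq_right (by linarith), min_eq_right (by linarith)]
    simp
  · rw [if_neg (not_le.mpr h)]
    rcases le_or_gt 0 t with ht | ht
    · have h1 : |t| = t := abs_of_nonneg ht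
      have h2 : R < t := by rwa [h1] at h
      have h3 : Real.sign t = 1 := Real.sign_of_pos (by linarith)
      rw [h1, h3, max_eq_left (by linarith), min_eq_right (by linarith)]
      push_cast
      ring
    · have h1 : |t| = -t := abs_of_neg ht
      have h2 : t < -R := by rw [h1] at h; linarith
      have h3 : Real.sign t = -1 := Real.sign_of_neg ht
      rw [h1, h3, max_eq_right (by linarith), min_eq_left (by linarith)]
      push_cast
      ring

lemma stretch_re {σ₀ R : ℝ} (hR : 0 < R) (t : ℝ) : (stretch σ₀ R t).re = t := by
  rw [stretch_eq hR]; simp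

lemma stretch_im {σ₀ R : ℝ} (hR : 0 < R) (t : ℝ) : (stretch σ₀ R t).im = mfun σ₀ R t := by
  rw [stretch_eq hR]; simp

lemma mfun_mono {σ₀ R : ℝ} (hσ : 0 ≤ σ₀) : Monotone (mfun σ₀ R) := by
  apply Monotone.const_mul _ hσ
  exact ((monotone_id.add_const (-R)).max monotone_const).add
    ((monotone_id.add_const R).min monotone_const)

lemma mfun_top {σ₀ R Rh : ℝ} (hR : 0 < R) (hRR : R < Rh) : mfun σ₀ R Rh = σ₀ * (Rh - R) := by
  unfold mfun
  rw [max_eq_left (by linarith), min_eq_right (by linarith)]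
  ring

lemma mfun_bot {σ₀ R Rh : ℝ} (hR : 0 < R) (hRR : R < Rh) :
    mfun σ₀ R (-Rh) = -(σ₀ * (Rh - R)) := by
  unfold mfun
  rw [max_eq_right (by linarith), min_eq_left (by linarith)]
  ring

lemma continuous_mfun (σ₀ R : ℝ) : Continuous (mfun σ₀ R) := by
  unfold mfun
  exact continuous_const.mul (((continuous_id.sub continuous_const).max continuous_const).add
    ((continuous_id.add continuous_const).min continuous_const))

lemma continuous_stretch {σ₀ R : ℝ} (hR : 0 < R) : Continuous (stretch σ₀ R) := by
  have : stretch σ₀ R = fun t : ℝ => (t : ℂ) + Complex.I * (mfun σ₀ R t : ℂ) := by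
    funext t; exact stretch_eq hR t
  rw [this]
  exact Complex.continuous_ofReal.add (continuous_const.mul
    (Complex.continuous_ofReal.comp (continuous_mfun σ₀ R)))

/-- the local PML coefficient α -/
def alph (σ₀ R x : ℝ) : ℂ := if |x| < R then 1 else 1 + Complex.I * σ₀

lemma stretch_hasDerivAt {σ₀ R : ℝ} (hR : 0 < R) {x : ℝ} (hx : |x| ≠ R) :
    HasDerivAt (stretch σ₀ R) (alph σ₀ R x) x := by
  have hid : HasDerivAt (fun t : ℝ => (t : ℂ)) 1 x := by
    simpa using (hasDerivAt_id x).ofReal_comp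
  rcases lt_or_gt_of_ne hx with h | h
  · -- |x| < R : stretch = id near x
    have hev : ∀ᶠ t in nhds x, stretch σ₀ R t = (t : ℂ) := by
      have hop : IsOpen {t : ℝ | |t| < R} := isOpen_lt (continuous_abs) continuous_const
      filter_upwards [hop.mem_nhds h] with t ht
      simp only [stretch, if_pos (le_of_lt ht)]
    rw [alph, if_pos h]
    exact hid.congr_of_eventuallyEq (hev.mono fun t ht => ht)
  · -- |x| > R
    rw [alph, if_neg (not_lt.mpr h.le)]
    rcases le_or_gt 0 x with hx0 | hx0
    · have hxR : R < x := by rwa [abs_of_nonneg hx0] at h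
      have hev : ∀ᶠ t in nhds x, stretch σ₀ R t = ((t : ℂ) + Complex.I * σ₀ * ((t : ℂ) - R)) := by
        filter_upwards [(isOpen_lt continuous_const continuous_id).mem_nhds hxR] with t ht
        have ht' : R < t := ht
        rw [stretch_eq hR]
        unfold mfun
        rw [max_eq_left (by linarith), min_eq_right (by linarith)]
        push_cast
        ring
      have hd : HasDerivAt (fun t : ℝ => ((t : ℂ) + Complex.I * σ₀ * ((t : ℂ) - R)))
          (1 + Complex.I * σ₀) x := by
        have := hid.add (((hid.sub_const (R : ℂ)).const_mul (Complex.I * σ₀)))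
        exact this.congr_deriv (by ring)
      exact hd.congr_of_eventuallyEq (hev.mono fun t ht => ht)
    · have hxR : x < -R := by rw [abs_of_neg hx0] at h; linarith
      have hev : ∀ᶠ t in nhds x, stretch σ₀ R t = ((t : ℂ) + Complex.I * σ₀ * ((t : ℂ) + R)) := by
        filter_upwards [(isOpen_lt continuous_id continuous_const).mem_nhds hxR] with t ht
        have ht' : t < -R := ht
        rw [stretch_eq hR]
        unfold mfun
        rw [max_eq_right (by linarith), min_eq_left (by linarith)]
        push_cast
        ring
      have hd : HasDerivAt (fun t : ℝ => ((t : ℂ) + Complex.I * σ₀ * ((t : ℂ) + R)))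
          (1 + Complex.I * σ₀) x := by
        have := hid.add (((hid.add_const (R : ℂ)).const_mul (Complex.I * σ₀)))
        exact this.congr_deriv (by ring)
      exact hd.congr_of_eventuallyEq (hev.mono fun t ht => ht)

end PML

namespace PML

def Em (k σ₀ R : ℝ) (x : ℝ) : ℂ := Complex.exp (-(Complex.I * k * stretch σ₀ R x))
def Ep (k σ₀ R : ℝ) (x : ℝ) : ℂ := Complex.exp (Complex.I * k * stretch σ₀ R x)
def Fp (k σ₀ R Rh : ℝ) (f : ℝ → ℂ) (x : ℝ) : ℂ := ∫ t in x..Rh, Ep k σ₀ R t * f t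
def Fm (k σ₀ R Rh : ℝ) (f : ℝ → ℂ) (x : ℝ) : ℂ := ∫ t in (-Rh)..x, Em k σ₀ R t * f t

lemma norm_Ep {k σ₀ R : ℝ} (hR : 0 < R) (t : ℝ) :
    ‖Ep k σ₀ R t‖ = Real.exp (-(k * mfun σ₀ R t)) := by
  rw [Ep, Complex.norm_exp]
  congr 1
  have : (Complex.I * k * stretch σ₀ R t).re
      = -(k * (stretch σ₀ R t).im) := by
    simp [Complex.mul_re, Complex.mul_im]
  rw [this, stretch_im hR]

lemma norm_Em {k σ₀ R : ℝ} (hR : 0 < R) (t : ℝ) :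
    ‖Em k σ₀ R t‖ = Real.exp (k * mfun σ₀ R t) := by
  rw [Em, Complex.norm_exp]
  congr 1
  have : (-(Complex.I * k * stretch σ₀ R t)).re
      = k * (stretch σ₀ R t).im := by
    simp [Complex.mul_re, Complex.mul_im]
  rw [this, stretch_im hR]

lemma uhat_eq (k σ₀ R Rh : ℝ) (f : ℝ → ℂ) (x : ℝ) :
    uhat k σ₀ R Rh f x =
      -(1 / (2 * Complex.I * k)) * (Em k σ₀ R x * Fp k σ₀ R Rh f x)
        + (-(1 / (2 * Complex.I * k)) * (Ep k σ₀ R x * Fm k σ₀ R Rh f x)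
        + (D1 k σ₀ R Rh f * Em k σ₀ R x + D2 k σ₀ R Rh f * Ep k σ₀ R x)) := by
  simp only [uhat, Fp, Fm, Em, Ep]
  ring

section Deriv

variable {k σ₀ R Rh : ℝ} {f : ℝ → ℂ}

lemma cont_gp (hR : 0 < R) (hf : ContinuousOn f (Set.Icc (-Rh) Rh)) :
    ContinuousOn (fun t => Ep k σ₀ R t * f t) (Set.Icc (-Rh) Rh) :=
  ((continuous_const.mul (continuous_stretch hR)).cexp.continuousOn).mul hf

lemma cont_gm (hR : 0 < R) (hf : ContinuousOn f (Set.Icc (-Rh) Rh)) :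
    ContinuousOn (fun t => Em k σ₀ R t * f t) (Set.Icc (-Rh) Rh) :=
  (((continuous_const.mul (continuous_stretch hR)).neg.cexp).continuousOn).mul hf

lemma intervalIntegrable_of_sub {g : ℝ → ℂ} (hg : ContinuousOn g (Set.Icc (-Rh) Rh))
    {a b : ℝ} (ha : a ∈ Set.Icc (-Rh) Rh) (hb : b ∈ Set.Icc (-Rh) Rh) :
    IntervalIntegrable g MeasureTheory.volume a b := by
  exact ContinuousOn.intervalIntegrable (hg.mono (Set.uIcc_subset_Icc ha hb))

-- FTC derivatives
lemma Fm_hasDerivAt (hR : 0 < R) (hRh : R < Rh) (hf : ContinuousOn f (Set.Icc (-Rh) Rh))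
    {x : ℝ} (hx : x ∈ Set.Ioo (-Rh) Rh) :
    HasDerivAt (Fm k σ₀ R Rh f) (Em k σ₀ R x * f x) x := by
  have hIcc : Set.Icc (-Rh) Rh ∈ nhds x := Icc_mem_nhds hx.1 hx.2
  have hg := cont_gm (k := k) (σ₀ := σ₀) hR hf
  exact intervalIntegral.integral_hasDerivAt_right
    (intervalIntegrable_of_sub hg (Set.left_mem_Icc.mpr (by linarith [hx.1, hx.2])) (Set.mem_Icc_of_Ioo hx))
    ⟨_, hIcc, hg.aestronglyMeasurable measurableSet_Icc⟩
    (hg.continuousAt hIcc)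

lemma Fp_hasDerivAt (hR : 0 < R) (hRh : R < Rh) (hf : ContinuousOn f (Set.Icc (-Rh) Rh))
    {x : ℝ} (hx : x ∈ Set.Ioo (-Rh) Rh) :
    HasDerivAt (Fp k σ₀ R Rh f) (-(Ep k σ₀ R x * f x)) x := by
  have hIcc : Set.Icc (-Rh) Rh ∈ nhds x := Icc_mem_nhds hx.1 hx.2
  have hg := cont_gp (k := k) (σ₀ := σ₀) hR hf
  exact intervalIntegral.integral_hasDerivAt_left
    (intervalIntegrable_of_sub hg (Set.mem_Icc_of_Ioo hx) (Set.right_mem_Icc.mpr (by linarith [hx.1, hx.2])))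
    ⟨_, hIcc, hg.aestronglyMeasurable measurableSet_Icc⟩
    (hg.continuousAt hIcc)

lemma Em_hasDerivAt (hR : 0 < R) {x : ℝ} (hx : |x| ≠ R) :
    HasDerivAt (Em k σ₀ R) (Em k σ₀ R x * -(Complex.I * k * alph σ₀ R x)) x := by
  have h := (((stretch_hasDerivAt (σ₀ := σ₀) hR hx).const_mul ((Complex.I * (k:ℂ)))).neg).cexp
  exact h

lemma Ep_hasDerivAt (hR : 0 < R) {x : ℝ} (hx : |x| ≠ R) :
    HasDerivAt (Ep k σ₀ R) (Ep k σ₀ R x * (Complex.I * k * alph σ₀ R x)) x := by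
  have h := ((stretch_hasDerivAt (σ₀ := σ₀) hR hx).const_mul ((Complex.I * (k:ℂ)))).cexp
  exact h

/-- value of the first derivative of `uhat` -/
def V (k σ₀ R Rh : ℝ) (f : ℝ → ℂ) (x : ℝ) : ℂ :=
  alph σ₀ R x / 2 * (Em k σ₀ R x * Fp k σ₀ R Rh f x)
    - alph σ₀ R x / 2 * (Ep k σ₀ R x * Fm k σ₀ R Rh f x)
    - Complex.I * k * alph σ₀ R x * (D1 k σ₀ R Rh f * Em k σ₀ R x)
    + Complex.I * k * alph σ₀ R x * (D2 k σ₀ R Rh f * Ep k σ₀ R x)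

lemma uhat_hasDerivAt (hk : k ≠ 0) (hR : 0 < R) (hRh : R < Rh)
    (hf : ContinuousOn f (Set.Icc (-Rh) Rh))
    {x : ℝ} (hx : x ∈ Set.Ioo (-Rh) Rh) (hxR : |x| ≠ R) :
    HasDerivAt (uhat k σ₀ R Rh f) (V k σ₀ R Rh f x) x := by
  have hEm := Em_hasDerivAt (k := k) (σ₀ := σ₀) hR hxR
  have hEp := Ep_hasDerivAt (k := k) (σ₀ := σ₀) hR hxR
  have hFp := Fp_hasDerivAt (k := k) (σ₀ := σ₀) hR hRh hf hx
  have hFm := Fm_hasDerivAt (k := k) (σ₀ := σ₀) hR hRh hf hx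
  have H := (((hEm.mul hFp).const_mul (-(1 / (2 * Complex.I * k)))).add
    (((hEp.mul hFm).const_mul (-(1 / (2 * Complex.I * k)))).add
      ((hEm.const_mul (D1 k σ₀ R Rh f)).add (hEp.const_mul (D2 k σ₀ R Rh f)))))
  have huh : uhat k σ₀ R Rh f = fun y =>
      -(1 / (2 * Complex.I * k)) * (Em k σ₀ R y * Fp k σ₀ R Rh f y)
        + (-(1 / (2 * Complex.I * k)) * (Ep k σ₀ R y * Fm k σ₀ R Rh f y)
        + (D1 k σ₀ R Rh f * Em k σ₀ R y + D2 k σ₀ R Rh f * Ep k σ₀ R y)) := by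
    funext y; exact uhat_eq k σ₀ R Rh f y
  rw [huh]
  refine H.congr_deriv ?_
  unfold V
  have h2 : (2 : ℂ) * Complex.I * k ≠ 0 := by
    simp [Complex.I_ne_zero, hk]
  have hk' : (k : ℂ) ≠ 0 := by exact_mod_cast hk
  field_simp
  ring

end Deriv
end PML

namespace PML
section Deriv2
variable {k σ₀ R Rh : ℝ} {f : ℝ → ℂ}

lemma eventually_alph (hR : 0 < R) (hRh : R < Rh) {x : ℝ}
    (hx : x ∈ Set.Ioo (-Rh) Rh) (hxR : |x| ≠ R) :
    ∀ᶠ y in nhds x, y ∈ Set.Ioo (-Rh) Rh ∧ |y| ≠ R ∧ alph σ₀ R y = alph σ₀ R x := by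
  rcases lt_or_gt_of_ne hxR with h | h
  · have hop : IsOpen {t : ℝ | |t| < R} := isOpen_lt continuous_abs continuous_const
    filter_upwards [hop.mem_nhds h] with y hy
    have hy' : |y| < R := hy
    have h1 := abs_lt.mp hy'
    refine ⟨⟨by linarith, by linarith⟩, ne_of_lt hy', ?_⟩
    rw [alph, if_pos hy', alph, if_pos h]
  · rcases le_or_gt 0 x with hx0 | hx0
    · have hxR' : R < x := by rwa [abs_of_nonneg hx0] at h
      filter_upwards [Ioo_mem_nhds hxR' hx.2] with y hy
      have hy1 : R < y := hy.1
      have hy2 : |y| = y := abs_of_nonneg (by linarith)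
      refine ⟨⟨by linarith, hy.2⟩, by rw [hy2]; exact ne_of_gt hy1, ?_⟩
      rw [alph, if_neg (by rw [hy2]; exact not_lt.mpr hy1.le),
        alph, if_neg (not_lt.mpr h.le)]
    · have hxR' : x < -R := by rw [abs_of_neg hx0] at h; linarith
      filter_upwards [Ioo_mem_nhds hx.1 hxR'] with y hy
      have hy1 : y < -R := hy.2
      have hy2 : |y| = -y := abs_of_neg (by linarith)
      refine ⟨⟨hy.1, by linarith⟩, by rw [hy2]; intro hc; linarith, ?_⟩
      rw [alph, if_neg (by rw [hy2]; intro hc; linarith),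
        alph, if_neg (not_lt.mpr h.le)]

lemma EmEp (x : ℝ) : Em k σ₀ R x * Ep k σ₀ R x = 1 := by
  rw [Em, Ep, ← Complex.exp_add]
  simp

lemma uhat_deriv2 (hk : k ≠ 0) (hR : 0 < R) (hRh : R < Rh)
    (hf : ContinuousOn f (Set.Icc (-Rh) Rh))
    {x : ℝ} (hx : x ∈ Set.Ioo (-Rh) Rh) (hxR : |x| ≠ R) :
    DifferentiableAt ℝ (uhat k σ₀ R Rh f) x ∧
    DifferentiableAt ℝ (deriv (uhat k σ₀ R Rh f)) x ∧
    deriv (deriv (uhat k σ₀ R Rh f)) x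
      = (Complex.I * k * alph σ₀ R x) ^ 2 * uhat k σ₀ R Rh f x - alph σ₀ R x * f x := by
  set a := alph σ₀ R x with ha
  set vx : ℝ → ℂ := fun y => a / 2 * (Em k σ₀ R y * Fp k σ₀ R Rh f y)
      - a / 2 * (Ep k σ₀ R y * Fm k σ₀ R Rh f y)
      - Complex.I * k * a * D1 k σ₀ R Rh f * Em k σ₀ R y
      + Complex.I * k * a * D2 k σ₀ R Rh f * Ep k σ₀ R y with hvx
  have hev : deriv (uhat k σ₀ R Rh f) =ᶠ[nhds x] vx := by
    filter_upwards [eventually_alph (σ₀ := σ₀) hR hRh hx hxR] with y hy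
    obtain ⟨hy1, hy2, hy3⟩ := hy
    rw [(uhat_hasDerivAt hk hR hRh hf hy1 hy2).deriv]
    simp only [V, hvx, hy3, ← ha]
    ring
  have hEm := Em_hasDerivAt (k := k) (σ₀ := σ₀) hR hxR
  have hEp := Ep_hasDerivAt (k := k) (σ₀ := σ₀) hR hxR
  have hFp := Fp_hasDerivAt (k := k) (σ₀ := σ₀) hR hRh hf hx
  have hFm := Fm_hasDerivAt (k := k) (σ₀ := σ₀) hR hRh hf hx
  have H := ((((hEm.mul hFp).const_mul (a / 2)).sub
      ((hEp.mul hFm).const_mul (a / 2))).sub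
      (hEm.const_mul (Complex.I * k * a * D1 k σ₀ R Rh f))).add
      (hEp.const_mul (Complex.I * k * a * D2 k σ₀ R Rh f))
  have hW : HasDerivAt vx
      ((Complex.I * k * a) ^ 2 * uhat k σ₀ R Rh f x - a * f x) x := by
    have key : a / 2 * ((Em k σ₀ R x * -(Complex.I * ↑k * a)) * Fp k σ₀ R Rh f x
          + Em k σ₀ R x * -(Ep k σ₀ R x * f x))
        - a / 2 * ((Ep k σ₀ R x * (Complex.I * ↑k * a)) * Fm k σ₀ R Rh f x
          + Ep k σ₀ R x * (Em k σ₀ R x * f x))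
        - Complex.I * ↑k * a * D1 k σ₀ R Rh f * (Em k σ₀ R x * -(Complex.I * ↑k * a))
        + Complex.I * ↑k * a * D2 k σ₀ R Rh f * (Ep k σ₀ R x * (Complex.I * ↑k * a))
        = (Complex.I * k * a) ^ 2 * uhat k σ₀ R Rh f x
          - a * (Em k σ₀ R x * Ep k σ₀ R x) * f x := by
      rw [uhat_eq]
      have h2 : (2 : ℂ) * Complex.I * (k : ℂ) ≠ 0 := by
        simp [Complex.I_ne_zero, hk]
      have hk' : (k : ℂ) ≠ 0 := by exact_mod_cast hk
      field_simp
      ring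
    rw [EmEp, mul_one] at key
    refine H.congr_deriv ?_
    rw [← ha, ← key]
  refine ⟨(uhat_hasDerivAt hk hR hRh hf hx hxR).differentiableAt, ?_, ?_⟩
  · exact (hev.differentiableAt_iff).mpr hW.differentiableAt
  · rw [hev.deriv_eq, hW.deriv]

end Deriv2
end PML

namespace PML
section Bounds
variable {k σ₀ R Rh : ℝ} {f : ℝ → ℂ}

def c4 : ℝ := 1 - Real.exp (-4)

lemma c4_pos : 0 < c4 := by
  have : Real.exp (-4) < 1 := by
    rw [show (1:ℝ) = Real.exp 0 by simp]
    exact Real.exp_lt_exp.mpr (by norm_num)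
  unfold c4; linarith

lemma intInt_norm_f (hf : ContinuousOn f (Set.Icc (-Rh) Rh))
    {a b : ℝ} (ha : a ∈ Set.Icc (-Rh) Rh) (hb : b ∈ Set.Icc (-Rh) Rh) :
    IntervalIntegrable (fun t => ‖f t‖) MeasureTheory.volume a b :=
  ContinuousOn.intervalIntegrable (hf.norm.mono (Set.uIcc_subset_Icc ha hb))

lemma M_nonneg (hRh : -Rh ≤ Rh) : 0 ≤ ∫ t in (-Rh)..Rh, ‖f t‖ :=
  intervalIntegral.integral_nonneg hRh (fun t _ => norm_nonneg _)

lemma bound_EmFp (hσ : 0 < σ₀) (hk : 0 < k) (hR : 0 < R) (hRh : R < Rh)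
    (hf : ContinuousOn f (Set.Icc (-Rh) Rh)) {x : ℝ} (hx : x ∈ Set.Icc (-Rh) Rh) :
    ‖Em k σ₀ R x * Fp k σ₀ R Rh f x‖ ≤ ∫ t in (-Rh)..Rh, ‖f t‖ := by
  obtain ⟨hx1, hx2⟩ := Set.mem_Icc.mp hx
  have hRmem : Rh ∈ Set.Icc (-Rh) Rh := Set.right_mem_Icc.mpr (by linarith)
  have heq : Em k σ₀ R x * Fp k σ₀ R Rh f x
      = ∫ t in x..Rh, Em k σ₀ R x * (Ep k σ₀ R t * f t) := by
    rw [Fp, intervalIntegral.integral_const_mul]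
  rw [heq]
  have int1 : IntervalIntegrable (fun t => ‖Em k σ₀ R x * (Ep k σ₀ R t * f t)‖)
      MeasureTheory.volume x Rh :=
    ContinuousOn.intervalIntegrable
      (((continuousOn_const.mul (cont_gp (k := k) (σ₀ := σ₀) hR hf)).norm).mono
        (Set.uIcc_subset_Icc hx hRmem))
  have int2 := intInt_norm_f hf hx hRmem
  calc ‖∫ t in x..Rh, Em k σ₀ R x * (Ep k σ₀ R t * f t)‖
      ≤ ∫ t in x..Rh, ‖Em k σ₀ R x * (Ep k σ₀ R t * f t)‖ :=
        intervalIntegral.norm_integral_le_integral_norm hx2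
    _ ≤ ∫ t in x..Rh, ‖f t‖ := by
        apply intervalIntegral.integral_mono_on hx2 int1 int2
        intro t ht
        rw [norm_mul, norm_mul, norm_Em hR, norm_Ep hR]
        have h1 : mfun σ₀ R x ≤ mfun σ₀ R t := mfun_mono hσ.le ht.1
        have hh : Real.exp (k * mfun σ₀ R x) * Real.exp (-(k * mfun σ₀ R t)) ≤ 1 := by
          rw [← Real.exp_add]
          apply Real.exp_le_one_iff.mpr
          nlinarith
        have := mul_le_mul_of_nonneg_right hh (norm_nonneg (f t))
        simpa [mul_assoc] using this
    _ ≤ ∫ t in (-Rh)..Rh, ‖f t‖ := by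
        rw [← intervalIntegral.integral_add_adjacent_intervals
          (intInt_norm_f hf (Set.left_mem_Icc.mpr (by linarith)) hx) int2]
        have h0 : 0 ≤ ∫ t in (-Rh)..x, ‖f t‖ :=
          intervalIntegral.integral_nonneg hx1 (fun t _ => norm_nonneg _)
        linarith

lemma bound_EpFm (hσ : 0 < σ₀) (hk : 0 < k) (hR : 0 < R) (hRh : R < Rh)
    (hf : ContinuousOn f (Set.Icc (-Rh) Rh)) {x : ℝ} (hx : x ∈ Set.Icc (-Rh) Rh) :
    ‖Ep k σ₀ R x * Fm k σ₀ R Rh f x‖ ≤ ∫ t in (-Rh)..Rh, ‖f t‖ := by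
  obtain ⟨hx1, hx2⟩ := Set.mem_Icc.mp hx
  have hLmem : -Rh ∈ Set.Icc (-Rh) Rh := Set.left_mem_Icc.mpr (by linarith)
  have heq : Ep k σ₀ R x * Fm k σ₀ R Rh f x
      = ∫ t in (-Rh)..x, Ep k σ₀ R x * (Em k σ₀ R t * f t) := by
    rw [Fm, intervalIntegral.integral_const_mul]
  rw [heq]
  have int1 : IntervalIntegrable (fun t => ‖Ep k σ₀ R x * (Em k σ₀ R t * f t)‖)
      MeasureTheory.volume (-Rh) x :=
    ContinuousOn.intervalIntegrable
      (((continuousOn_const.mul (cont_gm (k := k) (σ₀ := σ₀) hR hf)).norm).mono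
        (Set.uIcc_subset_Icc hLmem hx))
  have int2 := intInt_norm_f hf hLmem hx
  calc ‖∫ t in (-Rh)..x, Ep k σ₀ R x * (Em k σ₀ R t * f t)‖
      ≤ ∫ t in (-Rh)..x, ‖Ep k σ₀ R x * (Em k σ₀ R t * f t)‖ :=
        intervalIntegral.norm_integral_le_integral_norm hx1
    _ ≤ ∫ t in (-Rh)..x, ‖f t‖ := by
        apply intervalIntegral.integral_mono_on hx1 int1 int2
        intro t ht
        rw [norm_mul, norm_mul, norm_Ep hR, norm_Em hR]
        have h1 : mfun σ₀ R t ≤ mfun σ₀ R x := mfun_mono hσ.le ht.2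
        have hh : Real.exp (-(k * mfun σ₀ R x)) * Real.exp (k * mfun σ₀ R t) ≤ 1 := by
          rw [← Real.exp_add]
          apply Real.exp_le_one_iff.mpr
          nlinarith
        have := mul_le_mul_of_nonneg_right hh (norm_nonneg (f t))
        simpa [mul_assoc] using this
    _ ≤ ∫ t in (-Rh)..Rh, ‖f t‖ := by
        rw [← intervalIntegral.integral_add_adjacent_intervals int2
          (intInt_norm_f hf hx (Set.right_mem_Icc.mpr (by linarith)))]
        have h0 : 0 ≤ ∫ t in x..Rh, ‖f t‖ :=
          intervalIntegral.integral_nonneg hx2 (fun t _ => norm_nonneg _)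
        linarith

lemma mfun_mem {σ₀ R Rh : ℝ} (hσ : 0 < σ₀) (hR : 0 < R) (hRh : R < Rh) {t : ℝ}
    (ht : t ∈ Set.Icc (-Rh) Rh) :
    -(σ₀ * (Rh - R)) ≤ mfun σ₀ R t ∧ mfun σ₀ R t ≤ σ₀ * (Rh - R) := by
  obtain ⟨h1, h2⟩ := Set.mem_Icc.mp ht
  constructor
  · rw [← mfun_bot (σ₀ := σ₀) hR hRh]; exact mfun_mono hσ.le h1
  · rw [← mfun_top (σ₀ := σ₀) hR hRh]; exact mfun_mono hσ.le h2

lemma bound_J1 (hσ : 0 < σ₀) (hk : 0 < k) (hR : 0 < R) (hRh : R < Rh)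
    (hf : ContinuousOn f (Set.Icc (-Rh) Rh)) :
    ‖J1 k σ₀ R Rh f‖ ≤ Real.exp (k * (σ₀ * (Rh - R))) * ∫ t in (-Rh)..Rh, ‖f t‖ := by
  have hJ : J1 k σ₀ R Rh f = ∫ t in (-Rh)..Rh, Em k σ₀ R t * f t := rfl
  have hLmem : -Rh ∈ Set.Icc (-Rh) Rh := Set.left_mem_Icc.mpr (by linarith)
  have hRmem : Rh ∈ Set.Icc (-Rh) Rh := Set.right_mem_Icc.mpr (by linarith)
  have int1 : IntervalIntegrable (fun t => ‖Em k σ₀ R t * f t‖)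
      MeasureTheory.volume (-Rh) Rh :=
    ContinuousOn.intervalIntegrable (((cont_gm (k := k) (σ₀ := σ₀) hR hf).norm).mono
      (Set.uIcc_subset_Icc hLmem hRmem))
  have int2 : IntervalIntegrable (fun t => Real.exp (k * (σ₀ * (Rh - R))) * ‖f t‖)
      MeasureTheory.volume (-Rh) Rh :=
    (intInt_norm_f hf hLmem hRmem).const_mul _
  rw [hJ]
  calc ‖∫ t in (-Rh)..Rh, Em k σ₀ R t * f t‖
      ≤ ∫ t in (-Rh)..Rh, ‖Em k σ₀ R t * f t‖ :=
        intervalIntegral.norm_integral_le_integral_norm (by linarith)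
    _ ≤ ∫ t in (-Rh)..Rh, Real.exp (k * (σ₀ * (Rh - R))) * ‖f t‖ := by
        apply intervalIntegral.integral_mono_on (by linarith) int1 int2
        intro t ht
        rw [norm_mul, norm_Em hR]
        have h1 := (mfun_mem hσ hR hRh ht).2
        have hh : Real.exp (k * mfun σ₀ R t) ≤ Real.exp (k * (σ₀ * (Rh - R))) :=
          Real.exp_le_exp.mpr (by nlinarith)
        exact mul_le_mul_of_nonneg_right hh (norm_nonneg _)
    _ = Real.exp (k * (σ₀ * (Rh - R))) * ∫ t in (-Rh)..Rh, ‖f t‖ :=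
        intervalIntegral.integral_const_mul _ _

lemma bound_J2 (hσ : 0 < σ₀) (hk : 0 < k) (hR : 0 < R) (hRh : R < Rh)
    (hf : ContinuousOn f (Set.Icc (-Rh) Rh)) :
    ‖J2 k σ₀ R Rh f‖ ≤ Real.exp (k * (σ₀ * (Rh - R))) * ∫ t in (-Rh)..Rh, ‖f t‖ := by
  have hJ : J2 k σ₀ R Rh f = ∫ t in (-Rh)..Rh, Ep k σ₀ R t * f t := rfl
  have hLmem : -Rh ∈ Set.Icc (-Rh) Rh := Set.left_mem_Icc.mpr (by linarith)
  have hRmem : Rh ∈ Set.Icc (-Rh) Rh := Set.right_mem_Icc.mpr (by linarith)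
  have int1 : IntervalIntegrable (fun t => ‖Ep k σ₀ R t * f t‖)
      MeasureTheory.volume (-Rh) Rh :=
    ContinuousOn.intervalIntegrable (((cont_gp (k := k) (σ₀ := σ₀) hR hf).norm).mono
      (Set.uIcc_subset_Icc hLmem hRmem))
  have int2 : IntervalIntegrable (fun t => Real.exp (k * (σ₀ * (Rh - R))) * ‖f t‖)
      MeasureTheory.volume (-Rh) Rh :=
    (intInt_norm_f hf hLmem hRmem).const_mul _
  rw [hJ]
  calc ‖∫ t in (-Rh)..Rh, Ep k σ₀ R t * f t‖
      ≤ ∫ t in (-Rh)..Rh, ‖Ep k σ₀ R t * f t‖ :=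
        intervalIntegral.norm_integral_le_integral_norm (by linarith)
    _ ≤ ∫ t in (-Rh)..Rh, Real.exp (k * (σ₀ * (Rh - R))) * ‖f t‖ := by
        apply intervalIntegral.integral_mono_on (by linarith) int1 int2
        intro t ht
        rw [norm_mul, norm_Ep hR]
        have h1 := (mfun_mem hσ hR hRh ht).1
        have hh : Real.exp (-(k * mfun σ₀ R t)) ≤ Real.exp (k * (σ₀ * (Rh - R))) :=
          Real.exp_le_exp.mpr (by nlinarith)
        exact mul_le_mul_of_nonneg_right hh (norm_nonneg _)
    _ = Real.exp (k * (σ₀ * (Rh - R))) * ∫ t in (-Rh)..Rh, ‖f t‖ :=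
        intervalIntegral.integral_const_mul _ _

lemma norm_Em_le (hσ : 0 < σ₀) (hk : 0 < k) (hR : 0 < R) (hRh : R < Rh) {x : ℝ}
    (hx : x ∈ Set.Icc (-Rh) Rh) : ‖Em k σ₀ R x‖ ≤ Real.exp (k * (σ₀ * (Rh - R))) := by
  rw [norm_Em hR]
  exact Real.exp_le_exp.mpr (by nlinarith [(mfun_mem hσ hR hRh hx).2])

lemma norm_Ep_le (hσ : 0 < σ₀) (hk : 0 < k) (hR : 0 < R) (hRh : R < Rh) {x : ℝ}
    (hx : x ∈ Set.Icc (-Rh) Rh) : ‖Ep k σ₀ R x‖ ≤ Real.exp (k * (σ₀ * (Rh - R))) := by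
  rw [norm_Ep hR]
  exact Real.exp_le_exp.mpr (by nlinarith [(mfun_mem hσ hR hRh hx).1])

lemma norm_expw (hk : 0 < k) :
    ‖Complex.exp (2 * Complex.I * k * Rtil σ₀ R Rh)‖
      = (Real.exp (k * (σ₀ * (Rh - R))) * Real.exp (k * (σ₀ * (Rh - R))))⁻¹ := by
  rw [Complex.norm_exp, ← Real.exp_add, ← Real.exp_neg]
  congr 1
  simp [Rtil, Complex.mul_re, Complex.mul_im]
  ring

lemma norm_expw' (hk : 0 < k) :
    ‖Complex.exp (-(2 * Complex.I * k * Rtil σ₀ R Rh))‖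
      = Real.exp (k * (σ₀ * (Rh - R))) * Real.exp (k * (σ₀ * (Rh - R))) := by
  rw [Complex.norm_exp, ← Real.exp_add]
  congr 1
  simp [Rtil, Complex.mul_re, Complex.mul_im]
  ring

lemma denom_lb (hσ : 0 < σ₀) (hk : 0 < k) (hR : 0 < R) (hRh : R < Rh)
    (hs : 1 ≤ k * σ₀ * (Rh - R)) :
    Real.exp (k * (σ₀ * (Rh - R))) * Real.exp (k * (σ₀ * (Rh - R))) * c4
      ≤ ‖Complex.exp (2 * Complex.I * k * Rtil σ₀ R Rh)
          - Complex.exp (-(2 * Complex.I * k * Rtil σ₀ R Rh))‖ := by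
  set P := Real.exp (k * (σ₀ * (Rh - R))) with hP
  have hPP : (P * P)⁻¹ ≤ Real.exp (-4) * (P * P) := by
    rw [hP, ← Real.exp_add, ← Real.exp_neg, ← Real.exp_add]
    exact Real.exp_le_exp.mpr (by nlinarith)
  calc P * P * c4 = P * P - Real.exp (-4) * (P * P) := by unfold c4; ring
    _ ≤ P * P - (P * P)⁻¹ := by linarith
    _ = ‖Complex.exp (-(2 * Complex.I * k * Rtil σ₀ R Rh))‖
        - ‖Complex.exp (2 * Complex.I * k * Rtil σ₀ R Rh)‖ := by
          rw [norm_expw hk, norm_expw' hk]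
    _ ≤ ‖Complex.exp (-(2 * Complex.I * k * Rtil σ₀ R Rh))
        - Complex.exp (2 * Complex.I * k * Rtil σ₀ R Rh)‖ := norm_sub_norm_le _ _
    _ = _ := norm_sub_rev _ _

end Bounds
end PML

namespace PML
section Bounds2
variable {k σ₀ R Rh : ℝ} {f : ℝ → ℂ}

lemma norm_coef (hk : 0 < k) : ‖(1 : ℂ) / (2 * Complex.I * k)‖ = 1 / (2 * k) := by
  rw [norm_div, norm_one, norm_mul, norm_mul]
  simp [Complex.norm_real, abs_of_pos hk]

lemma aux_div (kk c P M N D E : ℝ) (hk : 0 < kk) (hc : 0 < c) (hP : 0 < P) (hM : 0 ≤ M)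
    (hE0 : 0 ≤ E) (hN : N ≤ 2 * (P * M)) (hD : P * P * c ≤ D) (hE : E ≤ P) :
    1 / (2 * kk) * N / D * E ≤ M / (kk * c) := by
  have hD0 : 0 < D := lt_of_lt_of_le (by positivity) hD
  rw [div_mul_eq_mul_div, div_le_div_iff₀ hD0 (by positivity)]
  have heq : 1 / (2 * kk) * N * E * (kk * c) = c / 2 * (N * E) := by
    field_simp
  rw [heq]
  have h1 : N * E ≤ 2 * (P * M) * P := mul_le_mul hN hE hE0 (by nlinarith)
  nlinarith [mul_nonneg hM (sub_nonneg.mpr hD)]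

lemma bound_D1Em (hσ : 0 < σ₀) (hk : 0 < k) (hR : 0 < R) (hRh : R < Rh)
    (hs : 1 ≤ k * σ₀ * (Rh - R)) (hf : ContinuousOn f (Set.Icc (-Rh) Rh))
    {x : ℝ} (hx : x ∈ Set.Icc (-Rh) Rh) :
    ‖D1 k σ₀ R Rh f * Em k σ₀ R x‖ ≤ (∫ t in (-Rh)..Rh, ‖f t‖) / (k * c4) := by
  set P := Real.exp (k * (σ₀ * (Rh - R))) with hP
  set M := ∫ t in (-Rh)..Rh, ‖f t‖ with hM
  have hM0 : 0 ≤ M := M_nonneg (by linarith)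
  have hP1 : 1 ≤ P := Real.one_le_exp (by nlinarith)
  have hP0 : 0 < P := by linarith
  have hnum : ‖Complex.exp (2 * Complex.I * k * Rtil σ₀ R Rh) * J2 k σ₀ R Rh f
      - J1 k σ₀ R Rh f‖ ≤ 2 * (P * M) := by
    have h1 := bound_J1 (k := k) hσ hk hR hRh hf
    have h2 := bound_J2 (k := k) hσ hk hR hRh hf
    rw [← hP, ← hM] at h1 h2
    have h3 : ‖Complex.exp (2 * Complex.I * ↑k * Rtil σ₀ R Rh)‖ ≤ 1 := by
      rw [norm_expw hk]
      rw [inv_le_one_iff₀]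
      right; nlinarith
    have hPM : 0 ≤ P * M := mul_nonneg hP0.le hM0
    calc ‖Complex.exp (2 * Complex.I * k * Rtil σ₀ R Rh) * J2 k σ₀ R Rh f
        - J1 k σ₀ R Rh f‖
        ≤ ‖Complex.exp (2 * Complex.I * k * Rtil σ₀ R Rh) * J2 k σ₀ R Rh f‖
          + ‖J1 k σ₀ R Rh f‖ := norm_sub_le _ _
      _ ≤ 1 * (P * M) + P * M := by
          rw [norm_mul]
          exact add_le_add (mul_le_mul h3 h2 (norm_nonneg _) zero_le_one) h1
      _ = 2 * (P * M) := by ring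
  have hden := denom_lb (σ₀ := σ₀) (R := R) (Rh := Rh) hσ hk hR hRh hs
  have hdenpos : 0 < P * P * c4 := mul_pos (mul_pos hP0 hP0) c4_pos
  have hD1 : ‖D1 k σ₀ R Rh f‖ = ‖(1 : ℂ) / (2 * Complex.I * k)‖
      * ‖Complex.exp (2 * Complex.I * k * Rtil σ₀ R Rh) * J2 k σ₀ R Rh f - J1 k σ₀ R Rh f‖
      / ‖Complex.exp (2 * Complex.I * k * Rtil σ₀ R Rh)
          - Complex.exp (-(2 * Complex.I * k * Rtil σ₀ R Rh))‖ := by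
    rw [D1, norm_div, norm_mul]
  have hfrac : ‖Complex.exp (2 * Complex.I * k * Rtil σ₀ R Rh) * J2 k σ₀ R Rh f
        - J1 k σ₀ R Rh f‖
      / ‖Complex.exp (2 * Complex.I * k * Rtil σ₀ R Rh)
          - Complex.exp (-(2 * Complex.I * k * Rtil σ₀ R Rh))‖
      ≤ (2 * (P * M)) / (P * P * c4) :=
    div_le_div₀ (by positivity) hnum hdenpos hden
  rw [norm_mul, hD1, norm_coef hk]
  have hEmx := norm_Em_le (k := k) hσ hk hR hRh hx
  rw [← hP] at hden hEmx
  exact aux_div k c4 P M _ _ _ hk c4_pos hP0 hM0 (norm_nonneg _) hnum hden hEmx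

lemma bound_D2Ep (hσ : 0 < σ₀) (hk : 0 < k) (hR : 0 < R) (hRh : R < Rh)
    (hs : 1 ≤ k * σ₀ * (Rh - R)) (hf : ContinuousOn f (Set.Icc (-Rh) Rh))
    {x : ℝ} (hx : x ∈ Set.Icc (-Rh) Rh) :
    ‖D2 k σ₀ R Rh f * Ep k σ₀ R x‖ ≤ (∫ t in (-Rh)..Rh, ‖f t‖) / (k * c4) := by
  set P := Real.exp (k * (σ₀ * (Rh - R))) with hP
  set M := ∫ t in (-Rh)..Rh, ‖f t‖ with hM
  have hM0 : 0 ≤ M := M_nonneg (by linarith)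
  have hP1 : 1 ≤ P := Real.one_le_exp (by nlinarith)
  have hP0 : 0 < P := by linarith
  have hnum : ‖Complex.exp (2 * Complex.I * k * Rtil σ₀ R Rh) * J1 k σ₀ R Rh f
      - J2 k σ₀ R Rh f‖ ≤ 2 * (P * M) := by
    have h1 := bound_J1 (k := k) hσ hk hR hRh hf
    have h2 := bound_J2 (k := k) hσ hk hR hRh hf
    rw [← hP, ← hM] at h1 h2
    have h3 : ‖Complex.exp (2 * Complex.I * ↑k * Rtil σ₀ R Rh)‖ ≤ 1 := by
      rw [norm_expw hk]
      rw [inv_le_one_iff₀]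
      right; nlinarith
    have hPM : 0 ≤ P * M := mul_nonneg hP0.le hM0
    calc ‖Complex.exp (2 * Complex.I * k * Rtil σ₀ R Rh) * J1 k σ₀ R Rh f
        - J2 k σ₀ R Rh f‖
        ≤ ‖Complex.exp (2 * Complex.I * k * Rtil σ₀ R Rh) * J1 k σ₀ R Rh f‖
          + ‖J2 k σ₀ R Rh f‖ := norm_sub_le _ _
      _ ≤ 1 * (P * M) + P * M := by
          rw [norm_mul]
          exact add_le_add (mul_le_mul h3 h1 (norm_nonneg _) zero_le_one) h2
      _ = 2 * (P * M) := by ring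
  have hden := denom_lb (σ₀ := σ₀) (R := R) (Rh := Rh) hσ hk hR hRh hs
  have hdenpos : 0 < P * P * c4 := mul_pos (mul_pos hP0 hP0) c4_pos
  have hD2 : ‖D2 k σ₀ R Rh f‖ = ‖(1 : ℂ) / (2 * Complex.I * k)‖
      * ‖Complex.exp (2 * Complex.I * k * Rtil σ₀ R Rh) * J1 k σ₀ R Rh f - J2 k σ₀ R Rh f‖
      / ‖Complex.exp (2 * Complex.I * k * Rtil σ₀ R Rh)
          - Complex.exp (-(2 * Complex.I * k * Rtil σ₀ R Rh))‖ := by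
    rw [D2, norm_div, norm_mul]
  have hfrac : ‖Complex.exp (2 * Complex.I * k * Rtil σ₀ R Rh) * J1 k σ₀ R Rh f
        - J2 k σ₀ R Rh f‖
      / ‖Complex.exp (2 * Complex.I * k * Rtil σ₀ R Rh)
          - Complex.exp (-(2 * Complex.I * k * Rtil σ₀ R Rh))‖
      ≤ (2 * (P * M)) / (P * P * c4) :=
    div_le_div₀ (by positivity) hnum hdenpos hden
  rw [norm_mul, hD2, norm_coef hk]
  have hEpx := norm_Ep_le (k := k) hσ hk hR hRh hx
  rw [← hP] at hden hEpx
  exact aux_div k c4 P M _ _ _ hk c4_pos hP0 hM0 (norm_nonneg _) hnum hden hEpx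

lemma uhat_bound (hσ : 0 < σ₀) (hk : 0 < k) (hR : 0 < R) (hRh : R < Rh)
    (hs : 1 ≤ k * σ₀ * (Rh - R)) (hf : ContinuousOn f (Set.Icc (-Rh) Rh))
    {x : ℝ} (hx : x ∈ Set.Icc (-Rh) Rh) :
    ‖uhat k σ₀ R Rh f x‖ ≤ (1 + 2 / c4) / k * ∫ t in (-Rh)..Rh, ‖f t‖ := by
  set M := ∫ t in (-Rh)..Rh, ‖f t‖ with hM
  have hM0 : 0 ≤ M := M_nonneg (by linarith)
  rw [uhat_eq]
  have h1 := bound_EmFp (k := k) hσ hk hR hRh hf hx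
  have h2 := bound_EpFm (k := k) hσ hk hR hRh hf hx
  have h3 := bound_D1Em hσ hk hR hRh hs hf hx
  have h4 := bound_D2Ep hσ hk hR hRh hs hf hx
  have hc := norm_coef hk
  have hc4 := c4_pos
  calc ‖-(1 / (2 * Complex.I * ↑k)) * (Em k σ₀ R x * Fp k σ₀ R Rh f x)
        + (-(1 / (2 * Complex.I * ↑k)) * (Ep k σ₀ R x * Fm k σ₀ R Rh f x)
        + (D1 k σ₀ R Rh f * Em k σ₀ R x + D2 k σ₀ R Rh f * Ep k σ₀ R x))‖
      ≤ ‖-(1 / (2 * Complex.I * ↑k)) * (Em k σ₀ R x * Fp k σ₀ R Rh f x)‖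
        + (‖-(1 / (2 * Complex.I * ↑k)) * (Ep k σ₀ R x * Fm k σ₀ R Rh f x)‖
        + (‖D1 k σ₀ R Rh f * Em k σ₀ R x‖ + ‖D2 k σ₀ R Rh f * Ep k σ₀ R x‖)) := by
        refine (norm_add_le _ _).trans ?_
        gcongr
        refine (norm_add_le _ _).trans ?_
        gcongr
        exact norm_add_le _ _
    _ ≤ 1 / (2 * k) * M + (1 / (2 * k) * M + (M / (k * c4) + M / (k * c4))) := by
        rw [← hM] at h1 h2 h3 h4
        have e1 : ‖-(1 / (2 * Complex.I * (k : ℂ))) * (Em k σ₀ R x * Fp k σ₀ R Rh f x)‖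
            = 1 / (2 * k) * ‖Em k σ₀ R x * Fp k σ₀ R Rh f x‖ := by
          rw [norm_mul, norm_neg, hc]
        have e2 : ‖-(1 / (2 * Complex.I * (k : ℂ))) * (Ep k σ₀ R x * Fm k σ₀ R Rh f x)‖
            = 1 / (2 * k) * ‖Ep k σ₀ R x * Fm k σ₀ R Rh f x‖ := by
          rw [norm_mul, norm_neg, hc]
        rw [e1, e2]
        have b1 : 1 / (2 * k) * ‖Em k σ₀ R x * Fp k σ₀ R Rh f x‖ ≤ 1 / (2 * k) * M :=
          mul_le_mul_of_nonneg_left h1 (by positivity)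
        have b2 : 1 / (2 * k) * ‖Ep k σ₀ R x * Fm k σ₀ R Rh f x‖ ≤ 1 / (2 * k) * M :=
          mul_le_mul_of_nonneg_left h2 (by positivity)
        exact add_le_add b1 (add_le_add b2 (add_le_add h3 h4))
    _ = (1 + 2 / c4) / k * M := by
        field_simp
        ring

end Bounds2
end PML

namespace PML
section Final
variable {k σ₀ R Rh : ℝ} {f : ℝ → ℂ}

lemma uhat_continuousOn (hR : 0 < R) (hRh : R < Rh)
    (hf : ContinuousOn f (Set.Icc (-Rh) Rh)) :
    ContinuousOn (uhat k σ₀ R Rh f) (Set.Icc (-Rh) Rh) := by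
  have hRR : -Rh ≤ Rh := by linarith
  have hLmem : -Rh ∈ Set.Icc (-Rh) Rh := Set.left_mem_Icc.mpr hRR
  have hRmem : Rh ∈ Set.Icc (-Rh) Rh := Set.right_mem_Icc.mpr hRR
  have hgm := cont_gm (k := k) (σ₀ := σ₀) hR hf
  have hgp := cont_gp (k := k) (σ₀ := σ₀) hR hf
  have higm : MeasureTheory.IntegrableOn (fun t => Em k σ₀ R t * f t)
      (Set.uIcc (-Rh) Rh) MeasureTheory.volume := by
    rw [Set.uIcc_of_le hRR]
    exact hgm.integrableOn_compact isCompact_Icc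
  have higp : MeasureTheory.IntegrableOn (fun t => Ep k σ₀ R t * f t)
      (Set.uIcc (-Rh) Rh) MeasureTheory.volume := by
    rw [Set.uIcc_of_le hRR]
    exact hgp.integrableOn_compact isCompact_Icc
  have hFm : ContinuousOn (Fm k σ₀ R Rh f) (Set.Icc (-Rh) Rh) := by
    have := intervalIntegral.continuousOn_primitive_interval higm
    rwa [Set.uIcc_of_le hRR] at this
  have hFmp : ContinuousOn (fun x => ∫ t in (-Rh)..x, Ep k σ₀ R t * f t)
      (Set.Icc (-Rh) Rh) := by
    have := intervalIntegral.continuousOn_primitive_interval higp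
    rwa [Set.uIcc_of_le hRR] at this
  have hFp : ContinuousOn (Fp k σ₀ R Rh f) (Set.Icc (-Rh) Rh) := by
    apply ContinuousOn.congr (continuousOn_const.sub hFmp)
      (g := Fp k σ₀ R Rh f)
    intro x hx
    have i1 : IntervalIntegrable (fun t => Ep k σ₀ R t * f t)
        MeasureTheory.volume (-Rh) Rh :=
      ContinuousOn.intervalIntegrable (hgp.mono (Set.uIcc_subset_Icc hLmem hRmem))
    have i2 : IntervalIntegrable (fun t => Ep k σ₀ R t * f t)
        MeasureTheory.volume (-Rh) x :=
      ContinuousOn.intervalIntegrable (hgp.mono (Set.uIcc_subset_Icc hLmem hx))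
    exact (intervalIntegral.integral_interval_sub_left i1 i2).symm
  have hEm : Continuous (Em k σ₀ R) := (continuous_const.mul (continuous_stretch hR)).neg.cexp
  have hEp : Continuous (Ep k σ₀ R) := (continuous_const.mul (continuous_stretch hR)).cexp
  have : ContinuousOn (fun x =>
      -(1 / (2 * Complex.I * (k : ℂ))) * (Em k σ₀ R x * Fp k σ₀ R Rh f x)
        + (-(1 / (2 * Complex.I * (k : ℂ))) * (Ep k σ₀ R x * Fm k σ₀ R Rh f x)
        + (D1 k σ₀ R Rh f * Em k σ₀ R x + D2 k σ₀ R Rh f * Ep k σ₀ R x)))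
      (Set.Icc (-Rh) Rh) := by
    exact (continuousOn_const.mul (hEm.continuousOn.mul hFp)).add
      ((continuousOn_const.mul (hEp.continuousOn.mul hFm)).add
        ((continuousOn_const.mul hEm.continuousOn).add
          (continuousOn_const.mul hEp.continuousOn)))
  exact this.congr fun x _ => uhat_eq k σ₀ R Rh f x

lemma cauchy_schwarz_M (hRh : 0 < Rh) (hRh2 : Rh ≤ 2)
    (hf : ContinuousOn f (Set.Icc (-Rh) Rh)) :
    (∫ t in (-Rh)..Rh, ‖f t‖) ≤ 2 * Real.sqrt (∫ t in (-Rh)..Rh, ‖f t‖ ^ 2) := by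
  have hRR : -Rh ≤ Rh := by linarith
  have hLmem : -Rh ∈ Set.Icc (-Rh) Rh := Set.left_mem_Icc.mpr hRR
  have hRmem : Rh ∈ Set.Icc (-Rh) Rh := Set.right_mem_Icc.mpr hRR
  have hint1 : IntervalIntegrable (fun t => ‖f t‖) MeasureTheory.volume (-Rh) Rh :=
    intInt_norm_f hf hLmem hRmem
  have hint2 : IntervalIntegrable (fun t => ‖f t‖ ^ 2) MeasureTheory.volume (-Rh) Rh :=
    ContinuousOn.intervalIntegrable ((hf.norm.pow 2).mono (Set.uIcc_subset_Icc hLmem hRmem))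
  set N := Real.sqrt (∫ t in (-Rh)..Rh, ‖f t‖ ^ 2) with hN
  have hI0 : 0 ≤ ∫ t in (-Rh)..Rh, ‖f t‖ ^ 2 :=
    intervalIntegral.integral_nonneg hRR (fun t _ => sq_nonneg _)
  have hN0 : 0 ≤ N := Real.sqrt_nonneg _
  have hNN : ∫ t in (-Rh)..Rh, ‖f t‖ ^ 2 = N ^ 2 := (Real.sq_sqrt hI0).symm
  rcases eq_or_lt_of_le hN0 with hN0' | hNpos
  · -- N = 0
    have hIz : ∫ t in (-Rh)..Rh, ‖f t‖ ^ 2 = 0 := by rw [hNN, ← hN0']; ring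
    have hae := (intervalIntegral.integral_eq_zero_iff_of_le_of_nonneg_ae hRR
      (Filter.Eventually.of_forall fun t => sq_nonneg _) hint2).mp hIz
    have hae' : (fun t => ‖f t‖)
        =ᵐ[MeasureTheory.volume.restrict (Set.Ioc (-Rh) Rh)] 0 := by
      filter_upwards [hae] with t ht
      have : ‖f t‖ ^ 2 = 0 := ht
      have := pow_eq_zero_iff (n := 2) (by norm_num) |>.mp this
      simpa using this
    have hM0 : (∫ t in (-Rh)..Rh, ‖f t‖) = 0 := by
      rw [intervalIntegral.integral_of_le hRR]
      rw [MeasureTheory.integral_congr_ae hae']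
      simp
    rw [hM0]
    positivity
  · -- N > 0
    have hpt : ∀ t ∈ Set.Icc (-Rh) Rh, ‖f t‖ ≤ N / 4 + ‖f t‖ ^ 2 / N := by
      intro t _
      have e : N / 4 + ‖f t‖ ^ 2 / N = (N ^ 2 / 4 + ‖f t‖ ^ 2) / N := by
        field_simp
      rw [e, le_div_iff₀ hNpos]
      nlinarith [sq_nonneg (‖f t‖ - N / 2)]
    have hint3 : IntervalIntegrable (fun t => N / 4 + ‖f t‖ ^ 2 / N)
        MeasureTheory.volume (-Rh) Rh :=
      (_root_.intervalIntegrable_const).add (hint2.div_const N)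
    calc (∫ t in (-Rh)..Rh, ‖f t‖)
        ≤ ∫ t in (-Rh)..Rh, (N / 4 + ‖f t‖ ^ 2 / N) :=
          intervalIntegral.integral_mono_on hRR hint1 hint3 hpt
      _ = (Rh - -Rh) * (N / 4) + (∫ t in (-Rh)..Rh, ‖f t‖ ^ 2) / N := by
          rw [intervalIntegral.integral_add _root_.intervalIntegrable_const (hint2.div_const N),
            intervalIntegral.integral_const, intervalIntegral.integral_div]
          simp [smul_eq_mul]
      _ ≤ 2 * N := by
          rw [hNN]
          have : N ^ 2 / N = N := by
            field_simp
          rw [this]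
          nlinarith
end Final
end PML

set_option maxHeartbeats 1600000 in
/-- One-dimensional case of Corollary 3.5 (H²-estimate for the truncated PML problem):
there is a constant `C > 0` depending only on `σ₀` such that for all `k ≥ 1`,
`0 < R < R̂ ≤ 2` with `k σ₀ L ≥ 1` and all continuous `f : [−R̂, R̂] → ℂ`, the truncated
PML solution `û` is twice differentiable at every `x ∈ (−R̂, R̂)` with `|x| ≠ R` and
satisfies `(∫_{(−R̂,R̂)∖{−R,R}} |û″|²)^{1/2} ≤ C k (∫_{−R̂}^{R̂} |f|²)^{1/2}`. -/
theorem pml_H2_stability_1d (σ₀ : ℝ) (hσ₀ : 0 < σ₀) :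
    ∃ C : ℝ, 0 < C ∧
      ∀ (k R Rh : ℝ) (f : ℝ → ℂ),
        1 ≤ k → 0 < R → R < Rh → Rh ≤ 2 → 1 ≤ k * σ₀ * (Rh - R) →
        ContinuousOn f (Set.Icc (-Rh) Rh) →
        (∀ x ∈ Set.Ioo (-Rh) Rh, |x| ≠ R →
          DifferentiableAt ℝ (uhat k σ₀ R Rh f) x ∧
            DifferentiableAt ℝ (deriv (uhat k σ₀ R Rh f)) x) ∧
        Real.sqrt (∫ x in Set.Ioo (-Rh) Rh \ {-R, R},
            ‖deriv (deriv (uhat k σ₀ R Rh f)) x‖ ^ 2) ≤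
          C * k * Real.sqrt (∫ x in (-Rh)..Rh, ‖f x‖ ^ 2) := by
  classical
  have hc4 := PML.c4_pos
  set C0 : ℝ := 1 + 2 / PML.c4 with hC0def
  have hC0 : 0 < C0 := by
    have h2 : 0 < 2 / PML.c4 := by positivity
    rw [hC0def]; linarith
  set B : ℝ := 1 + σ₀ with hBdef
  have hB1 : 1 ≤ B := by rw [hBdef]; linarith
  have hB0 : 0 < B := by linarith
  have hCpos : 0 < 6 * B ^ 2 * (C0 + 1) := by positivity
  refine ⟨6 * B ^ 2 * (C0 + 1), hCpos, ?_⟩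
  set C : ℝ := 6 * B ^ 2 * (C0 + 1) with hCdef
  intro k R Rh f hk hR hRh hRh2 hs hf
  have hk0 : 0 < k := by linarith
  have hkne : k ≠ 0 := hk0.ne'
  have hRh0 : 0 < Rh := by linarith
  have hRR : -Rh ≤ Rh := by linarith
  have habs : ∀ x ∈ Set.Ioo (-Rh) Rh \ ({-R, R} : Set ℝ), |x| ≠ R := by
    intro x hx hc
    rcases (abs_eq hR.le).mp hc with h | h
    · exact hx.2 (by simp [h])
    · exact hx.2 (by simp [h])
  constructor
  · intro x hx hxR
    exact ⟨(PML.uhat_deriv2 hkne hR hRh hf hx hxR).1,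
      (PML.uhat_deriv2 hkne hR hRh hf hx hxR).2.1⟩
  set S := Set.Ioo (-Rh) Rh \ ({-R, R} : Set ℝ) with hSdef
  have hSm : MeasurableSet S :=
    measurableSet_Ioo.diff ((measurableSet_singleton R).insert (-R))
  have hsub : S ⊆ Set.Icc (-Rh) Rh :=
    Set.diff_subset.trans Set.Ioo_subset_Icc_self
  have hsub2 : S ⊆ Set.Ioc (-Rh) Rh :=
    Set.diff_subset.trans Set.Ioo_subset_Ioc_self
  set M := ∫ t in (-Rh)..Rh, ‖f t‖ with hMdef
  set N := Real.sqrt (∫ x in (-Rh)..Rh, ‖f x‖ ^ 2) with hNdef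
  have hI0 : 0 ≤ ∫ x in (-Rh)..Rh, ‖f x‖ ^ 2 :=
    intervalIntegral.integral_nonneg hRR (fun t _ => sq_nonneg _)
  have hN0 : 0 ≤ N := Real.sqrt_nonneg _
  have hNN : (∫ x in (-Rh)..Rh, ‖f x‖ ^ 2) = N ^ 2 := (Real.sq_sqrt hI0).symm
  have hM0 : 0 ≤ M := PML.M_nonneg hRR
  have hMN : M ≤ 2 * N := PML.cauchy_schwarz_M hRh0 hRh2 hf
  have hu : ∀ x ∈ Set.Icc (-Rh) Rh, ‖uhat k σ₀ R Rh f x‖ ≤ C0 / k * M := by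
    intro x hx
    rw [hC0def]
    exact PML.uhat_bound hσ₀ hk0 hR hRh hs hf hx
  clear_value M N
  clear hNdef hMdef hI0
  obtain ⟨A, hAdef⟩ : ∃ a : ℝ, a = k * (B ^ 2 * (C0 * M)) := ⟨_, rfl⟩
  have hA0 : 0 ≤ A := by
    rw [hAdef]
    apply mul_nonneg hk0.le
    exact mul_nonneg (by positivity) (mul_nonneg hC0.le hM0)
  have hpt : ∀ x ∈ S, ‖deriv (deriv (uhat k σ₀ R Rh f)) x‖ ^ 2
      ≤ 2 * A ^ 2 + 2 * B ^ 2 * ‖f x‖ ^ 2 := by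
    intro x hx
    have hxI : x ∈ Set.Ioo (-Rh) Rh := hx.1
    have hxR : |x| ≠ R := habs x hx
    rw [(PML.uhat_deriv2 hkne hR hRh hf hxI hxR).2.2]
    have hα : ‖PML.alph σ₀ R x‖ ≤ B := by
      rw [PML.alph]
      split
      · rw [norm_one]; linarith
      · refine (norm_add_le _ _).trans ?_
        rw [norm_one, norm_mul, Complex.norm_I,
          Complex.norm_real, Real.norm_eq_abs, abs_of_pos hσ₀, one_mul, hBdef]
    have hIk : ‖Complex.I * (k : ℂ) * PML.alph σ₀ R x‖ = k * ‖PML.alph σ₀ R x‖ := by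
      rw [norm_mul, norm_mul, Complex.norm_I,
        Complex.norm_real, Real.norm_eq_abs, abs_of_pos hk0, one_mul]
    have h1 : ‖(Complex.I * k * PML.alph σ₀ R x) ^ 2 * uhat k σ₀ R Rh f x
        - PML.alph σ₀ R x * f x‖ ≤ A + B * ‖f x‖ := by
      refine (norm_sub_le _ _).trans ?_
      rw [norm_mul, norm_mul, norm_pow, hIk]
      apply add_le_add
      · have hα2 : (k * ‖PML.alph σ₀ R x‖) ^ 2 ≤ (k * B) ^ 2 := by
          apply pow_le_pow_left₀ (by positivity)
          exact mul_le_mul_of_nonneg_left hα hk0.le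
        calc (k * ‖PML.alph σ₀ R x‖) ^ 2 * ‖uhat k σ₀ R Rh f x‖
            ≤ (k * B) ^ 2 * (C0 / k * M) := by
              apply mul_le_mul hα2 (hu x (hsub hx)) (norm_nonneg _) (by positivity)
          _ = A := by rw [hAdef]; field_simp
      · exact mul_le_mul_of_nonneg_right hα (norm_nonneg _)
    have h2 := pow_le_pow_left₀ (norm_nonneg _) h1 2
    nlinarith [sq_nonneg (A - B * ‖f x‖)]
  have hgcont : ContinuousOn (fun x => 2 * A ^ 2 + 2 * B ^ 2 * ‖f x‖ ^ 2)
      (Set.Icc (-Rh) Rh) :=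
    continuousOn_const.add (continuousOn_const.mul (hf.norm.pow 2))
  have hg_int : MeasureTheory.IntegrableOn
      (fun x => 2 * A ^ 2 + 2 * B ^ 2 * ‖f x‖ ^ 2) S MeasureTheory.volume :=
    (hgcont.integrableOn_compact isCompact_Icc).mono_set hsub
  have hdd_meas : MeasureTheory.AEStronglyMeasurable
      (fun x => ‖deriv (deriv (uhat k σ₀ R Rh f)) x‖ ^ 2)
      (MeasureTheory.volume.restrict S) :=
    ((measurable_deriv _).norm.pow_const 2).aestronglyMeasurable
  have hdd_int : MeasureTheory.IntegrableOn
      (fun x => ‖deriv (deriv (uhat k σ₀ R Rh f)) x‖ ^ 2) S MeasureTheory.volume := by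
    apply MeasureTheory.Integrable.mono' hg_int hdd_meas
    filter_upwards [MeasureTheory.ae_restrict_mem hSm] with x hx
    rw [Real.norm_eq_abs, abs_of_nonneg (sq_nonneg _)]
    exact hpt x hx
  have hIle : (∫ x in S, ‖deriv (deriv (uhat k σ₀ R Rh f)) x‖ ^ 2)
      ≤ ∫ x in S, (2 * A ^ 2 + 2 * B ^ 2 * ‖f x‖ ^ 2) :=
    MeasureTheory.setIntegral_mono_on hdd_int hg_int hSm hpt
  have hfin : MeasureTheory.volume S < ⊤ :=
    lt_of_le_of_lt (MeasureTheory.measure_mono hsub) measure_Icc_lt_top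
  have hvol : (MeasureTheory.volume S).toReal ≤ 4 := by
    have h1 : (MeasureTheory.volume S).toReal
        ≤ (MeasureTheory.volume (Set.Icc (-Rh) Rh)).toReal :=
      ENNReal.toReal_mono measure_Icc_lt_top.ne (MeasureTheory.measure_mono hsub)
    rw [Real.volume_Icc, ENNReal.toReal_ofReal (by linarith)] at h1
    linarith
  have hsplit : (∫ x in S, (2 * A ^ 2 + 2 * B ^ 2 * ‖f x‖ ^ 2))
      = (MeasureTheory.volume S).toReal * (2 * A ^ 2)
        + 2 * B ^ 2 * ∫ x in S, ‖f x‖ ^ 2 := by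
    have hI2 : MeasureTheory.IntegrableOn (fun x => 2 * B ^ 2 * ‖f x‖ ^ 2) S
        MeasureTheory.volume :=
      (((continuousOn_const.mul (hf.norm.pow 2)).integrableOn_compact (μ := MeasureTheory.volume)
        isCompact_Icc).mono_set hsub)
    rw [MeasureTheory.integral_add (MeasureTheory.integrableOn_const (C := (2 * A ^ 2 : ℝ)) hfin.ne)
      hI2,
      MeasureTheory.setIntegral_const, MeasureTheory.integral_const_mul, smul_eq_mul,
        MeasureTheory.measureReal_def]
  have hf2 : (∫ x in S, ‖f x‖ ^ 2) ≤ N ^ 2 := by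
    have hIoc : MeasureTheory.IntegrableOn (fun x => ‖f x‖ ^ 2)
        (Set.Ioc (-Rh) Rh) MeasureTheory.volume :=
      ((hf.norm.pow 2).integrableOn_compact isCompact_Icc).mono_set Set.Ioc_subset_Icc_self
    have h := MeasureTheory.setIntegral_mono_set hIoc
      (MeasureTheory.ae_of_all _ fun x => sq_nonneg _)
      (HasSubset.Subset.eventuallyLE hsub2)
    rw [← hNN, intervalIntegral.integral_of_le hRR]
    exact h
  have hf20 : 0 ≤ ∫ x in S, ‖f x‖ ^ 2 :=
    MeasureTheory.setIntegral_nonneg hSm (fun x _ => sq_nonneg _)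
  have hX : (∫ x in S, ‖deriv (deriv (uhat k σ₀ R Rh f)) x‖ ^ 2)
      ≤ (C * k) ^ 2 * N ^ 2 := by
    have hA' : A ≤ k * (B ^ 2 * (C0 * (2 * N))) := by
      rw [hAdef]
      apply mul_le_mul_of_nonneg_left _ hk0.le
      apply mul_le_mul_of_nonneg_left _ (by positivity)
      exact mul_le_mul_of_nonneg_left hMN hC0.le
    have hA2 : A ^ 2 ≤ (k * (B ^ 2 * (C0 * (2 * N)))) ^ 2 := pow_le_pow_left₀ hA0 hA' 2
    have hk2 : 1 ≤ k ^ 2 := by nlinarith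
    have hB2 : 1 ≤ B ^ 2 := by nlinarith
    have hB4 : B ^ 2 ≤ B ^ 4 := by nlinarith
    have hQ0 : (0 : ℝ) ≤ k ^ 2 * (B ^ 4 * N ^ 2) := by positivity
    have e2 : B ^ 2 * N ^ 2 ≤ k ^ 2 * (B ^ 4 * N ^ 2) := by
      calc B ^ 2 * N ^ 2 ≤ B ^ 4 * N ^ 2 :=
            mul_le_mul_of_nonneg_right hB4 (sq_nonneg N)
        _ ≤ k ^ 2 * (B ^ 4 * N ^ 2) := le_mul_of_one_le_left (by positivity) hk2
    calc (∫ x in S, ‖deriv (deriv (uhat k σ₀ R Rh f)) x‖ ^ 2)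
        ≤ ∫ x in S, (2 * A ^ 2 + 2 * B ^ 2 * ‖f x‖ ^ 2) := hIle
      _ = (MeasureTheory.volume S).toReal * (2 * A ^ 2)
          + 2 * B ^ 2 * ∫ x in S, ‖f x‖ ^ 2 := hsplit
      _ ≤ 4 * (2 * A ^ 2) + 2 * B ^ 2 * N ^ 2 := by
          apply add_le_add
          · exact mul_le_mul_of_nonneg_right hvol (by positivity)
          · exact mul_le_mul_of_nonneg_left hf2 (by positivity)
      _ ≤ (C * k) ^ 2 * N ^ 2 := by
          rw [hCdef]
          have hfac : (0 : ℝ) ≤ 4 * C0 ^ 2 + 72 * C0 + 34 := by nlinarith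
          nlinarith [hA2, e2, mul_nonneg hfac hQ0, sq_nonneg N]
  have hsq := Real.sqrt_le_sqrt hX
  rw [show (C * k) ^ 2 * N ^ 2 = (C * k * N) ^ 2 by ring,
    Real.sqrt_sq (mul_nonneg (mul_nonneg hCpos.le hk0.le) hN0)] at hsq
  exact hsq

end
end

section
/- The one-dimensional truncated PML solution solves the truncated PML boundary value problem: if f : [−R̂, R̂] → ℂ is continuous, then û(−R̂) = û(R̂) = 0, and at every x ∈ (−R̂, R̂) with |x| ≠ R the function û is twice differentiable and satisfies −(1/α(x)) û″(x) − α(x) k² û(x) = f(x). -/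
open MeasureTheory intervalIntegral

noncomputable section

/-- The PML coefficient `α`: `α(t) = 1` for `|t| < R` and `α(t) = 1 + iσ₀` for `|t| > R`. -/
def alphaPML (σ₀ R t : ℝ) : ℂ := if |t| < R then 1 else 1 + Complex.I * σ₀

namespace PMLAux


lemma hasDerivAt_coe (x : ℝ) : HasDerivAt (fun t : ℝ => (t : ℂ)) 1 x := by
  simpa using (hasDerivAt_id' x).ofReal_comp

lemma stretch_eq_cont (σ₀ R : ℝ) (hR : 0 < R) :
    stretch σ₀ R = fun t : ℝ => (t : ℂ) +
      Complex.I * σ₀ * Complex.ofReal (max (t - R) 0 - max (-t - R) 0) := by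
  funext t
  unfold stretch
  by_cases h : |t| ≤ R
  · rw [if_pos h]
    obtain ⟨h1, h2⟩ := abs_le.mp h
    rw [max_eq_right (by linarith), max_eq_right (by linarith)]
    simp
  · rw [if_neg h]
    push_neg at h
    rcases le_or_gt 0 t with ht | ht
    · have habs : |t| = t := abs_of_nonneg ht
      have htR : R < t := by rwa [habs] at h
      rw [Real.sign_of_pos (lt_trans hR htR), habs,
        max_eq_left (by linarith), max_eq_right (by linarith)]
      push_cast; ring
    · have habs : |t| = -t := abs_of_neg ht
      have htR : R < -t := by rwa [habs] at h
      rw [Real.sign_of_neg ht, habs, max_eq_right (by linarith), max_eq_left (by linarith)]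
      push_cast; ring

lemma continuous_stretch (σ₀ R : ℝ) (hR : 0 < R) : Continuous (stretch σ₀ R) := by
  rw [stretch_eq_cont σ₀ R hR]
  fun_prop

lemma hasDerivAt_stretch (σ₀ R : ℝ) (hR : 0 < R) {x : ℝ} (hx : |x| ≠ R) :
    HasDerivAt (stretch σ₀ R) (alphaPML σ₀ R x) x := by
  rcases lt_or_gt_of_ne hx with h | h
  · have hev : stretch σ₀ R =ᶠ[nhds x] fun t : ℝ => (t : ℂ) := by
      filter_upwards [(isOpen_lt continuous_abs continuous_const).mem_nhds h] with y hy
      simp only [stretch, if_pos (le_of_lt hy)]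
    have h1 : HasDerivAt (stretch σ₀ R) 1 x :=
      (hasDerivAt_coe x).congr_of_eventuallyEq hev
    simpa [alphaPML, if_pos h] using h1
  · have hα : alphaPML σ₀ R x = 1 + Complex.I * σ₀ := if_neg (not_lt.mpr h.le)
    rcases le_or_gt 0 x with hx0 | hx0
    · have hxR : R < x := by rwa [abs_of_nonneg hx0] at h
      have hev : stretch σ₀ R =ᶠ[nhds x]
          fun t : ℝ => (t : ℂ) + Complex.I * σ₀ * ((t : ℂ) - R) := by
        filter_upwards [Ioi_mem_nhds hxR] with y hy
        have hy' : R < y := hy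
        have hy0 : 0 < y := lt_trans hR hy'
        have hyabs : |y| = y := abs_of_pos hy0
        have hcond : ¬ |y| ≤ R := by rw [hyabs]; exact not_le.mpr hy'
        unfold stretch
        rw [if_neg hcond, hyabs, Real.sign_of_pos hy0]
        push_cast; ring
      have hd : HasDerivAt (fun t : ℝ => (t : ℂ) + Complex.I * σ₀ * ((t : ℂ) - R))
          (1 + Complex.I * σ₀ * 1) x :=
        (hasDerivAt_coe x).add (((hasDerivAt_coe x).sub_const _).const_mul _)
      have := hd.congr_of_eventuallyEq hev
      rw [hα]; simpa using this
    · have hxR : x < -R := by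
        have : R < -x := by rwa [abs_of_neg hx0] at h
        linarith
      have hev : stretch σ₀ R =ᶠ[nhds x]
          fun t : ℝ => (t : ℂ) + Complex.I * σ₀ * ((t : ℂ) + R) := by
        filter_upwards [Iio_mem_nhds hxR] with y hy
        have hy' : y < -R := hy
        have hy0 : y < 0 := by linarith
        have hyabs : |y| = -y := abs_of_neg hy0
        have hcond : ¬ |y| ≤ R := by rw [hyabs]; push_neg; linarith
        unfold stretch
        rw [if_neg hcond, hyabs, Real.sign_of_neg hy0]
        push_cast; ring
      have hd : HasDerivAt (fun t : ℝ => (t : ℂ) + Complex.I * σ₀ * ((t : ℂ) + R))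
          (1 + Complex.I * σ₀ * 1) x :=
        (hasDerivAt_coe x).add (((hasDerivAt_coe x).add_const _).const_mul _)
      have := hd.congr_of_eventuallyEq hev
      rw [hα]; simpa using this

lemma alpha_eventually (σ₀ R : ℝ) {x : ℝ} (hx : |x| ≠ R) :
    (fun y => alphaPML σ₀ R y) =ᶠ[nhds x] fun _ => alphaPML σ₀ R x := by
  rcases lt_or_gt_of_ne hx with h | h
  · filter_upwards [(isOpen_lt continuous_abs continuous_const).mem_nhds h] with y hy
    simp only [alphaPML, if_pos hy, if_pos h]
  · filter_upwards [(isOpen_lt continuous_const continuous_abs).mem_nhds h] with y hy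
    simp only [alphaPML, if_neg (not_lt.mpr hy.le), if_neg (not_lt.mpr h.le)]

lemma stretch_Rh (σ₀ R Rh : ℝ) (hR : 0 < R) (hRRh : R < Rh) :
    stretch σ₀ R Rh = Rtil σ₀ R Rh := by
  have h0 : 0 < Rh := lt_trans hR hRRh
  unfold stretch Rtil
  rw [if_neg (by rw [abs_of_pos h0]; exact not_le.mpr hRRh), abs_of_pos h0,
    Real.sign_of_pos h0]
  push_cast; ring

lemma stretch_negRh (σ₀ R Rh : ℝ) (hR : 0 < R) (hRRh : R < Rh) :
    stretch σ₀ R (-Rh) = -Rtil σ₀ R Rh := by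
  have h0 : 0 < Rh := lt_trans hR hRRh
  unfold stretch Rtil
  rw [if_neg (by rw [abs_neg, abs_of_pos h0]; exact not_le.mpr hRRh), abs_neg, abs_of_pos h0,
    Real.sign_of_neg (neg_lt_zero.mpr h0)]
  push_cast; ring

lemma denom_ne (k σ₀ R Rh : ℝ) (hk : 0 < k) (hσ₀ : 0 < σ₀) (hRRh : R < Rh) :
    Complex.exp (2 * Complex.I * k * Rtil σ₀ R Rh) -
      Complex.exp (-(2 * Complex.I * k * Rtil σ₀ R Rh)) ≠ 0 := by
  intro h
  have h2 : Complex.exp (2 * Complex.I * k * Rtil σ₀ R Rh) =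
      Complex.exp (-(2 * Complex.I * k * Rtil σ₀ R Rh)) := sub_eq_zero.mp h
  have habs := congrArg norm h2
  rw [Complex.norm_exp, Complex.norm_exp] at habs
  have hre : (2 * Complex.I * (k:ℂ) * Rtil σ₀ R Rh).re =
      (-(2 * Complex.I * (k:ℂ) * Rtil σ₀ R Rh)).re := Real.exp_eq_exp.mp habs
  rw [Complex.neg_re] at hre
  have hre0 : (2 * Complex.I * (k:ℂ) * Rtil σ₀ R Rh).re = 0 := by linarith
  have hcalc : (2 * Complex.I * (k:ℂ) * Rtil σ₀ R Rh).re = -(2 * k * σ₀ * (Rh - R)) := by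
    simp [Rtil]
    ring
  rw [hcalc] at hre0
  nlinarith [mul_pos (mul_pos hk hσ₀) (sub_pos.mpr hRRh)]


/-- Auxiliary function: essentially `û′/(ikα)`. -/
def wfun (k σ₀ R Rh : ℝ) (f : ℝ → ℂ) (x : ℝ) : ℂ :=
  (1 / (2 * Complex.I * k)) * Complex.exp (-(Complex.I * k * stretch σ₀ R x)) *
      (∫ t in x..Rh, Complex.exp (Complex.I * k * stretch σ₀ R t) * f t)
    - (1 / (2 * Complex.I * k)) * Complex.exp (Complex.I * k * stretch σ₀ R x) *
      (∫ t in (-Rh)..x, Complex.exp (-(Complex.I * k * stretch σ₀ R t)) * f t)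
    - D1 k σ₀ R Rh f * Complex.exp (-(Complex.I * k * stretch σ₀ R x))
    + D2 k σ₀ R Rh f * Complex.exp (Complex.I * k * stretch σ₀ R x)

lemma derivs (k σ₀ R Rh : ℝ) (f : ℝ → ℂ)
    (hk : 0 < k) (hR : 0 < R) (hRRh : R < Rh)
    (hf : ContinuousOn f (Set.Icc (-Rh) Rh))
    {x : ℝ} (hx : x ∈ Set.Ioo (-Rh) Rh) (hxR : |x| ≠ R) :
    HasDerivAt (uhat k σ₀ R Rh f)
      (Complex.I * k * alphaPML σ₀ R x * wfun k σ₀ R Rh f x) x ∧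
    HasDerivAt (wfun k σ₀ R Rh f)
      (Complex.I * k * alphaPML σ₀ R x * uhat k σ₀ R Rh f x
        - 1 / (Complex.I * k) * f x) x := by
  have hstx := hasDerivAt_stretch σ₀ R hR hxR
  have hEp : HasDerivAt (fun y => Complex.exp (Complex.I * k * stretch σ₀ R y))
      (Complex.exp (Complex.I * k * stretch σ₀ R x) * (Complex.I * k * alphaPML σ₀ R x)) x :=
    (hstx.const_mul (Complex.I * k)).cexp
  have hEm : HasDerivAt (fun y => Complex.exp (-(Complex.I * k * stretch σ₀ R y)))
      (Complex.exp (-(Complex.I * k * stretch σ₀ R x)) *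
        -(Complex.I * k * alphaPML σ₀ R x)) x :=
    ((hstx.const_mul (Complex.I * k)).neg).cexp
  have hst_cont : Continuous (stretch σ₀ R) := continuous_stretch σ₀ R hR
  have hgP : ContinuousOn (fun t => Complex.exp (Complex.I * k * stretch σ₀ R t) * f t)
      (Set.Icc (-Rh) Rh) :=
    ((Complex.continuous_exp.comp (continuous_const.mul hst_cont)).continuousOn).mul hf
  have hgM : ContinuousOn (fun t => Complex.exp (-(Complex.I * k * stretch σ₀ R t)) * f t)
      (Set.Icc (-Rh) Rh) :=
    ((Complex.continuous_exp.comp (continuous_const.mul hst_cont).neg).continuousOn).mul hf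
  have hintP : IntervalIntegrable
      (fun t => Complex.exp (Complex.I * k * stretch σ₀ R t) * f t) volume x Rh :=
    (hgP.mono (by rw [Set.uIcc_of_le hx.2.le]; exact Set.Icc_subset_Icc hx.1.le le_rfl)).intervalIntegrable
  have hintM : IntervalIntegrable
      (fun t => Complex.exp (-(Complex.I * k * stretch σ₀ R t)) * f t) volume (-Rh) x :=
    (hgM.mono (by rw [Set.uIcc_of_le hx.1.le]; exact Set.Icc_subset_Icc le_rfl hx.2.le)).intervalIntegrable
  have hcf : ContinuousAt f x := hf.continuousAt (Icc_mem_nhds hx.1 hx.2)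
  have hcP : ContinuousAt (fun t => Complex.exp (Complex.I * k * stretch σ₀ R t) * f t) x :=
    ((Complex.continuous_exp.comp (continuous_const.mul hst_cont)).continuousAt).mul hcf
  have hcM : ContinuousAt (fun t => Complex.exp (-(Complex.I * k * stretch σ₀ R t)) * f t) x :=
    ((Complex.continuous_exp.comp (continuous_const.mul hst_cont).neg).continuousAt).mul hcf
  have hmP : StronglyMeasurableAtFilter
      (fun t => Complex.exp (Complex.I * k * stretch σ₀ R t) * f t) (nhds x) volume :=
    ContinuousOn.stronglyMeasurableAtFilter isOpen_Ioo
      (hgP.mono Set.Ioo_subset_Icc_self) x hx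
  have hmM : StronglyMeasurableAtFilter
      (fun t => Complex.exp (-(Complex.I * k * stretch σ₀ R t)) * f t) (nhds x) volume :=
    ContinuousOn.stronglyMeasurableAtFilter isOpen_Ioo
      (hgM.mono Set.Ioo_subset_Icc_self) x hx
  have hF : HasDerivAt (fun y => ∫ t in y..Rh, Complex.exp (Complex.I * k * stretch σ₀ R t) * f t)
      (-(Complex.exp (Complex.I * k * stretch σ₀ R x) * f x)) x :=
    integral_hasDerivAt_left hintP hmP hcP
  have hG : HasDerivAt
      (fun y => ∫ t in (-Rh)..y, Complex.exp (-(Complex.I * k * stretch σ₀ R t)) * f t)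
      (Complex.exp (-(Complex.I * k * stretch σ₀ R x)) * f x) x :=
    integral_hasDerivAt_right hintM hmM hcM
  have hEE : Complex.exp (-(Complex.I * k * stretch σ₀ R x)) *
      Complex.exp (Complex.I * k * stretch σ₀ R x) = 1 := by
    rw [← Complex.exp_add, neg_add_cancel, Complex.exp_zero]
  constructor
  · have hu_raw := ((((hEm.const_mul (-(1 / (2 * Complex.I * (k:ℂ))))).mul hF).sub
      ((hEp.const_mul (1 / (2 * Complex.I * (k:ℂ)))).mul hG)).add
      (hEm.const_mul (D1 k σ₀ R Rh f))).add (hEp.const_mul (D2 k σ₀ R Rh f))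
    have hfun : HasDerivAt (uhat k σ₀ R Rh f) _ x := hu_raw
    convert hfun using 1
    unfold wfun
    ring
  · have hw_raw := ((((hEm.const_mul (1 / (2 * Complex.I * (k:ℂ)))).mul hF).sub
      ((hEp.const_mul (1 / (2 * Complex.I * (k:ℂ)))).mul hG)).sub
      (hEm.const_mul (D1 k σ₀ R Rh f))).add (hEp.const_mul (D2 k σ₀ R Rh f))
    have hfun : HasDerivAt (wfun k σ₀ R Rh f) _ x := hw_raw
    convert hfun using 1
    unfold uhat
    linear_combination (1 / (Complex.I * (k:ℂ)) * f x) * hEE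

lemma bdry_algebra (c E A B : ℂ) (hE : E ≠ 0) (hd : E ^ 2 - (E ^ 2)⁻¹ ≠ 0) :
    -c * E * A + c * (E ^ 2 * B - A) / (E ^ 2 - (E ^ 2)⁻¹) * E⁻¹ +
      c * (E ^ 2 * A - B) / (E ^ 2 - (E ^ 2)⁻¹) * E = 0 := by
  have hE2 : E ^ 2 ≠ 0 := pow_ne_zero _ hE
  have h4 : E ^ 4 - 1 ≠ 0 := by
    intro h
    apply hd
    field_simp
    linear_combination h
  have hden : E ^ 2 - (E ^ 2)⁻¹ = (E ^ 4 - 1) / E ^ 2 := by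
    field_simp
  rw [hden]
  field_simp
  ring

end PMLAux


/-- The one-dimensional truncated PML solution solves the truncated PML boundary value
problem: if `f : [−R̂, R̂] → ℂ` is continuous, then `û(−R̂) = û(R̂) = 0` and at every
`x ∈ (−R̂, R̂)` with `|x| ≠ R` the function `û` is twice differentiable and satisfies
`−(1/α(x)) û″(x) − α(x) k² û(x) = f(x)`. -/
theorem pml_solution_solves_bvp_1d (k σ₀ R Rh : ℝ) (f : ℝ → ℂ)
    (hk : 0 < k) (hσ₀ : 0 < σ₀) (hR : 0 < R) (hRRh : R < Rh)
    (hf : ContinuousOn f (Set.Icc (-Rh) Rh)) :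
    uhat k σ₀ R Rh f (-Rh) = 0 ∧ uhat k σ₀ R Rh f Rh = 0 ∧
      ∀ x ∈ Set.Ioo (-Rh) Rh, |x| ≠ R →
        DifferentiableAt ℝ (uhat k σ₀ R Rh f) x ∧
        DifferentiableAt ℝ (deriv (uhat k σ₀ R Rh f)) x ∧
        -(1 / alphaPML σ₀ R x) * deriv (deriv (uhat k σ₀ R Rh f)) x -
            alphaPML σ₀ R x * k ^ 2 * uhat k σ₀ R Rh f x = f x := by
  have hRh0 : 0 < Rh := lt_trans hR hRRh
  have hkc : ((k : ℂ)) ≠ 0 := by exact_mod_cast hk.ne'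
  have hIk : (Complex.I * (k:ℂ)) ≠ 0 := mul_ne_zero Complex.I_ne_zero hkc
  have h2Ik : (2 * Complex.I * (k:ℂ)) ≠ 0 :=
    mul_ne_zero (mul_ne_zero two_ne_zero Complex.I_ne_zero) hkc
  have hE2 : Complex.exp (2 * Complex.I * (k:ℂ) * Rtil σ₀ R Rh)
      = Complex.exp (Complex.I * k * Rtil σ₀ R Rh) ^ 2 := by
    rw [pow_two, ← Complex.exp_add]; congr 1; ring
  have hEneg : Complex.exp (-(Complex.I * (k:ℂ) * Rtil σ₀ R Rh))
      = (Complex.exp (Complex.I * k * Rtil σ₀ R Rh))⁻¹ := Complex.exp_neg _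
  have hE2neg : Complex.exp (-(2 * Complex.I * (k:ℂ) * Rtil σ₀ R Rh))
      = (Complex.exp (Complex.I * k * Rtil σ₀ R Rh) ^ 2)⁻¹ := by
    rw [Complex.exp_neg, hE2]
  have hdne := PMLAux.denom_ne k σ₀ R Rh hk hσ₀ hRRh
  have hdne' : Complex.exp (Complex.I * (k:ℂ) * Rtil σ₀ R Rh) ^ 2 -
      (Complex.exp (Complex.I * (k:ℂ) * Rtil σ₀ R Rh) ^ 2)⁻¹ ≠ 0 := by
    rw [hE2, hE2neg] at hdne; exact hdne
  have hEne : Complex.exp (Complex.I * (k:ℂ) * Rtil σ₀ R Rh) ≠ 0 := Complex.exp_ne_zero _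
  refine ⟨?_, ?_, ?_⟩
  · -- boundary value at -Rh
    unfold uhat D1 D2
    have hJ2 : (∫ t in (-Rh)..Rh, Complex.exp (Complex.I * (k:ℂ) * stretch σ₀ R t) * f t)
        = J2 k σ₀ R Rh f := rfl
    rw [PMLAux.stretch_negRh σ₀ R Rh hR hRRh, integral_same, mul_zero, hJ2,
      show -(Complex.I * (k:ℂ) * -Rtil σ₀ R Rh) = Complex.I * (k:ℂ) * Rtil σ₀ R Rh by ring,
      show Complex.I * (k:ℂ) * -Rtil σ₀ R Rh = -(Complex.I * (k:ℂ) * Rtil σ₀ R Rh) by ring,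
      hEneg, hE2, hE2neg]
    linear_combination PMLAux.bdry_algebra (1 / (2 * Complex.I * (k:ℂ)))
      (Complex.exp (Complex.I * (k:ℂ) * Rtil σ₀ R Rh)) (J2 k σ₀ R Rh f) (J1 k σ₀ R Rh f)
      hEne hdne'

  · -- boundary value at Rh
    unfold uhat D1 D2
    have hJ1 : (∫ t in (-Rh)..Rh, Complex.exp (-(Complex.I * (k:ℂ) * stretch σ₀ R t)) * f t)
        = J1 k σ₀ R Rh f := rfl
    rw [PMLAux.stretch_Rh σ₀ R Rh hR hRRh, integral_same, mul_zero, hJ1,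
      hEneg, hE2, hE2neg]
    linear_combination PMLAux.bdry_algebra (1 / (2 * Complex.I * (k:ℂ)))
      (Complex.exp (Complex.I * (k:ℂ) * Rtil σ₀ R Rh)) (J1 k σ₀ R Rh f) (J2 k σ₀ R Rh f)
      hEne hdne'

  · -- the ODE
    intro x hx hxR
    obtain ⟨hu, hw⟩ := PMLAux.derivs k σ₀ R Rh f hk hR hRRh hf hx hxR
    have hSopen : IsOpen (Set.Ioo (-Rh) Rh ∩ {y : ℝ | |y| ≠ R}) :=
      isOpen_Ioo.inter (isOpen_ne.preimage continuous_abs)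
    have hderiv_eq : deriv (uhat k σ₀ R Rh f) =ᶠ[nhds x]
        fun y => Complex.I * k * alphaPML σ₀ R y * PMLAux.wfun k σ₀ R Rh f y := by
      filter_upwards [hSopen.mem_nhds ⟨hx, hxR⟩] with y hy
      exact ((PMLAux.derivs k σ₀ R Rh f hk hR hRRh hf hy.1 hy.2).1).deriv
    have hveq : (fun y => Complex.I * (k:ℂ) * alphaPML σ₀ R y * PMLAux.wfun k σ₀ R Rh f y)
        =ᶠ[nhds x]
        fun y => Complex.I * (k:ℂ) * alphaPML σ₀ R x * PMLAux.wfun k σ₀ R Rh f y := by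
      filter_upwards [PMLAux.alpha_eventually σ₀ R hxR] with y hy
      rw [show alphaPML σ₀ R y = alphaPML σ₀ R x from hy]
    have hv : HasDerivAt
        (fun y => Complex.I * (k:ℂ) * alphaPML σ₀ R y * PMLAux.wfun k σ₀ R Rh f y)
        (Complex.I * (k:ℂ) * alphaPML σ₀ R x *
          (Complex.I * (k:ℂ) * alphaPML σ₀ R x * uhat k σ₀ R Rh f x
            - 1 / (Complex.I * (k:ℂ)) * f x)) x :=
      (hw.const_mul (Complex.I * (k:ℂ) * alphaPML σ₀ R x)).congr_of_eventuallyEq hveq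
    have hdd : HasDerivAt (deriv (uhat k σ₀ R Rh f))
        (Complex.I * (k:ℂ) * alphaPML σ₀ R x *
          (Complex.I * (k:ℂ) * alphaPML σ₀ R x * uhat k σ₀ R Rh f x
            - 1 / (Complex.I * (k:ℂ)) * f x)) x :=
      hv.congr_of_eventuallyEq hderiv_eq
    refine ⟨hu.differentiableAt, hdd.differentiableAt, ?_⟩
    rw [hdd.deriv]
    have hα : alphaPML σ₀ R x ≠ 0 := by
      unfold alphaPML
      split_ifs
      · exact one_ne_zero
      · intro h
        have := congrArg Complex.re h
        simp at this
    field_simp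
    linear_combination (-alphaPML σ₀ R x * (k:ℂ) ^ 2 *
      uhat k σ₀ R Rh f x) * Complex.I_sq

end
end
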